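/- arXiv:1911.08629 — 5 statements merged into one kernel-verified Lean document; each statement's English description precedes it below -/
import Mathlib

section
/- For integers $n \ge 10$ and $k \ge 1$, the function $F_k(t) = \sum_{i=1}^{n-1}\big(\sum_{j=1}^{n-1} \frac{1}{t+\frac{j-i}{n^k}}\big)\chi_{(\frac{i}{n^k},\frac{i+1}{n^k}]}(t)$ on $(0,1)$ satisfies $\frac{1}{2} n \log n \le \|F_k\|_{1,\infty} \le n \log n$. -/
open MeasureTheory Set

/-- The distribution function of `f` viewed as a function on `(0,1)`. -/
noncomputable def distrib (f : ℝ → ℝ) (s : ℝ) : ENNReal :=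
  volume {x ∈ Set.Ioo (0 : ℝ) 1 | s < |f x|}

/-- The decreasing rearrangement `f*` of a function on `(0,1)`. -/
noncomputable def rearr (f : ℝ → ℝ) (t : ℝ) : ℝ :=
  sInf {s : ℝ | 0 < s ∧ distrib f s ≤ ENNReal.ofReal t}

/-- The weak-`L¹` quasi-norm `‖f‖_{1,∞} = sup_{t ∈ (0,1)} t f*(t)`. -/
noncomputable def wnorm (f : ℝ → ℝ) : ENNReal :=
  ⨆ t ∈ Set.Ioo (0 : ℝ) 1, ENNReal.ofReal (t * rearr f t)

lemma log_le_sum (m : ℕ) :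
    Real.log (((m:ℝ)+2)/2) ≤ ∑ j ∈ Finset.Icc 1 m, 1/((j:ℝ)+1) := by
  induction m with
  | zero => simp
  | succ m ih =>
    rw [Finset.sum_Icc_succ_top (by omega : 1 ≤ m + 1)]
    push_cast
    have hm2 : (0:ℝ) < (m:ℝ)+2 := by positivity
    have e1 : ((m:ℝ)+1+1) = (m:ℝ)+2 := by ring
    rw [e1]
    have h2 : Real.log (((m:ℝ)+1+2)/2) =
        Real.log (((m:ℝ)+2)/2) + Real.log (((m:ℝ)+3)/((m:ℝ)+2)) := by
      rw [show ((m:ℝ)+1+2)/2 = (((m:ℝ)+2)/2) * (((m:ℝ)+3)/((m:ℝ)+2)) by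
        field_simp; ring]
      rw [Real.log_mul (by positivity) (by positivity)]
    rw [h2]
    have h3 : Real.log (((m:ℝ)+3)/((m:ℝ)+2)) ≤ 1/((m:ℝ)+2) := by
      have h := Real.log_le_sub_one_of_pos (show (0:ℝ) < ((m:ℝ)+3)/((m:ℝ)+2) by positivity)
      have e : ((m:ℝ)+3)/((m:ℝ)+2) = 1 + 1/((m:ℝ)+2) := by field_simp; ring
      rw [e] at h ⊢; linarith
    linarith

lemma sum_le_log (m : ℕ) :
    ∑ j ∈ Finset.Icc 1 m, 1/((j:ℝ)+1) ≤ Real.log ((m:ℝ)+1) := by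
  induction m with
  | zero => simp
  | succ m ih =>
    rw [Finset.sum_Icc_succ_top (by omega : 1 ≤ m + 1)]
    push_cast
    have hm1 : (0:ℝ) < (m:ℝ)+1 := by positivity
    have e1 : ((m:ℝ)+1+1) = (m:ℝ)+2 := by ring
    rw [e1]
    have h2 : Real.log ((m:ℝ)+2) =
        Real.log ((m:ℝ)+1) + Real.log (((m:ℝ)+2)/((m:ℝ)+1)) := by
      nth_rewrite 1 [show (m:ℝ)+2 = ((m:ℝ)+1) * (((m:ℝ)+2)/((m:ℝ)+1)) by field_simp]
      rw [Real.log_mul (by positivity) (by positivity)]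
    rw [h2]
    have h3 : 1/((m:ℝ)+2) ≤ Real.log (((m:ℝ)+2)/((m:ℝ)+1)) := by
      have h := Real.log_le_sub_one_of_pos (show (0:ℝ) < ((m:ℝ)+1)/((m:ℝ)+2) by positivity)
      have e : Real.log (((m:ℝ)+1)/((m:ℝ)+2)) = - Real.log (((m:ℝ)+2)/((m:ℝ)+1)) := by
        rw [← Real.log_inv]; congr 1; rw [inv_div]
      have e2 : ((m:ℝ)+1)/((m:ℝ)+2) = 1 - 1/((m:ℝ)+2) := by field_simp; ring
      rw [e, e2] at h; linarith
    linarith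

/-- strict numeric inequality : n log n / 2 < (n-1) * Σ_{j=1}^{n-1} 1/(j+1) for n ≥ 10 -/
lemma numeric (n : ℕ) (hn : 10 ≤ n) :
    (n:ℝ) * Real.log n / 2 < ((n:ℝ)-1) * ∑ j ∈ Finset.Icc 1 (n-1), 1/((j:ℝ)+1) := by
  have hn10 : (10:ℝ) ≤ (n:ℝ) := by exact_mod_cast hn
  have hL := log_le_sum (n-1)
  have hcast : ((n-1:ℕ):ℝ) = (n:ℝ) - 1 := by
    have : (1:ℕ) ≤ n := by omega
    push_cast [this]; ring
  rw [hcast] at hL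
  have hlog2 : (0:ℝ) < Real.log 2 := Real.log_pos (by norm_num)
  have hlogn : Real.log 10 ≤ Real.log n := Real.log_le_log (by norm_num) hn10
  have hlog10 : (9:ℝ)/4 * Real.log 2 ≤ Real.log 10 := by
    have h1 : Real.log 512 ≤ Real.log 10000 := Real.log_le_log (by norm_num) (by norm_num)
    have h2 : Real.log 512 = 9 * Real.log 2 := by
      rw [show (512:ℝ) = 2^(9:ℕ) by norm_num, Real.log_pow]; push_cast; ring
    have h3 : Real.log 10000 = 4 * Real.log 10 := by
      rw [show (10000:ℝ) = 10^(4:ℕ) by norm_num, Real.log_pow]; push_cast; ring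
    linarith
  -- log((n-1+2)/2) > log n - log 2
  have hstep : Real.log (((n:ℝ)-1+2)/2) > Real.log ((n:ℝ)) - Real.log 2 := by
    have : Real.log ((n:ℝ)) - Real.log 2 = Real.log ((n:ℝ)/2) :=
      (Real.log_div (by positivity) (by norm_num)).symm
    rw [this]
    apply Real.log_lt_log (by positivity)
    linarith
  have hlogn_lb : (9:ℝ)/4 * Real.log 2 ≤ Real.log n := le_trans hlog10 hlogn
  have key : (n:ℝ) * Real.log n / 2 ≤ ((n:ℝ)-1) * (Real.log n - Real.log 2) := by
    nlinarith [mul_nonneg (by linarith : (0:ℝ) ≤ (n:ℝ)-2)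
      (by linarith : (0:ℝ) ≤ Real.log n - 9/4*Real.log 2), hlog2, hn10]
  calc (n:ℝ) * Real.log n / 2 ≤ ((n:ℝ)-1) * (Real.log n - Real.log 2) := key
    _ < ((n:ℝ)-1) * Real.log (((n:ℝ)-1+2)/2) := by
        apply mul_lt_mul_of_pos_left hstep (by linarith)
    _ ≤ ((n:ℝ)-1) * ∑ j ∈ Finset.Icc 1 (n-1), 1/((j:ℝ)+1) := by
        apply mul_le_mul_of_nonneg_left hL (by linarith)

set_option maxHeartbeats 1000000 in
theorem stmt1 (n k : ℕ) (hn : 10 ≤ n) (hk : 1 ≤ k)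
    (F : ℝ → ℝ)
    (hF : ∀ t : ℝ, F t = ∑ i ∈ Finset.Icc 1 (n - 1),
      (Set.Ioc ((i : ℝ) / n ^ k) (((i : ℝ) + 1) / n ^ k)).indicator
        (fun s => ∑ j ∈ Finset.Icc 1 (n - 1), 1 / (s + ((j : ℝ) - (i : ℝ)) / n ^ k)) t) :
    ENNReal.ofReal ((n : ℝ) * Real.log n / 2) ≤ wnorm F ∧
      wnorm F ≤ ENNReal.ofReal ((n : ℝ) * Real.log n) := by
  set N : ℝ := (n:ℝ)^k with hNdef
  have hnR : (10:ℝ) ≤ (n:ℝ) := by exact_mod_cast hn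
  have hN0 : (0:ℝ) < N := by positivity
  have hNn : (n:ℝ) ≤ N := le_self_pow₀ (by linarith) (by omega)
  have hdiv : ∀ a b : ℝ, a ≤ b → a/N ≤ b/N := fun a b h => by gcongr
  have hmcast : ((n-1:ℕ):ℝ) = (n:ℝ)-1 := by
    have h1 : (1:ℕ) ≤ n := by omega
    push_cast [h1]; ring
  have hcard : (Finset.Icc 1 (n-1)).card = n - 1 := by
    rw [Nat.card_Icc]; omega
  have hIne : (Finset.Icc 1 (n-1)).Nonempty := Finset.nonempty_Icc.mpr (by omega)
  have hiR : ∀ i ∈ Finset.Icc 1 (n-1), (1:ℝ) ≤ (i:ℝ) ∧ (i:ℝ) ≤ (n:ℝ)-1 := by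
    intro i hi
    rw [Finset.mem_Icc] at hi
    constructor
    · exact_mod_cast hi.1
    · rw [← hmcast]; exact_mod_cast hi.2
  -- value of F on each interval
  have hFval : ∀ i ∈ Finset.Icc 1 (n-1), ∀ x ∈ Set.Ioc ((i:ℝ)/N) (((i:ℝ)+1)/N),
      F x = ∑ j ∈ Finset.Icc 1 (n-1), 1/(x + ((j:ℝ)-(i:ℝ))/N) := by
    intro i hi x hx
    rw [hF x]
    rw [Finset.sum_eq_single_of_mem i hi]
    · exact Set.indicator_of_mem hx _
    · intro b hb hbi
      apply Set.indicator_of_notMem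
      intro hmem
      rcases Nat.lt_or_ge b i with hlt | hge
      · have hb1 : ((b:ℝ)+1) ≤ (i:ℝ) := by exact_mod_cast Nat.succ_le_of_lt hlt
        have : ((b:ℝ)+1)/N ≤ (i:ℝ)/N := by apply hdiv _ _ hb1
        have h1 := hmem.2
        have h2 := hx.1
        linarith [hdiv _ _ hb1]
      · have hgt : i < b := lt_of_le_of_ne hge (Ne.symm hbi)
        have hb1 : ((i:ℝ)+1) ≤ (b:ℝ) := by exact_mod_cast Nat.succ_le_of_lt hgt
        have h1 := hmem.1
        have h2 := hx.2
        linarith [hdiv _ _ hb1]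
  -- F is zero off the intervals
  have hcases : ∀ x : ℝ, F x = 0 ∨ ∃ i ∈ Finset.Icc 1 (n-1),
      x ∈ Set.Ioc ((i:ℝ)/N) (((i:ℝ)+1)/N) := by
    intro x
    by_cases h : ∃ i ∈ Finset.Icc 1 (n-1), x ∈ Set.Ioc ((i:ℝ)/N) (((i:ℝ)+1)/N)
    · exact Or.inr h
    · push_neg at h
      left
      rw [hF x]
      apply Finset.sum_eq_zero
      intro i hi
      exact Set.indicator_of_notMem (h i hi) _
  -- denominators are positive on the interval
  have hden : ∀ i ∈ Finset.Icc 1 (n-1), ∀ x ∈ Set.Ioc ((i:ℝ)/N) (((i:ℝ)+1)/N),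
      ∀ j ∈ Finset.Icc 1 (n-1), 0 < x + ((j:ℝ)-(i:ℝ))/N := by
    intro i hi x hx j hj
    have h1 := hx.1
    have hj1 : (1:ℝ) ≤ (j:ℝ) := (hiR j hj).1
    have : x + ((j:ℝ)-(i:ℝ))/N = (x - (i:ℝ)/N) + (j:ℝ)/N := by ring
    rw [this]
    have : (0:ℝ) < (j:ℝ)/N := by positivity
    have hxi : 0 < x - (i:ℝ)/N := by linarith
    linarith
  set L : ℝ := ∑ j ∈ Finset.Icc 1 (n-1), 1/((j:ℝ)+1) with hLdef
  have hLpos : 0 < L := by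
    apply Finset.sum_pos _ hIne
    intro j hj
    have := (hiR j hj).1
    positivity
  have hLle : L ≤ Real.log n := by
    have := sum_le_log (n-1)
    rw [hmcast] at this
    have e : (n:ℝ)-1+1 = (n:ℝ) := by ring
    rw [e] at this
    exact this
  have hlogn : 0 < Real.log n := Real.log_pos (by linarith)
  -- pointwise lower bound
  have hlow : ∀ i ∈ Finset.Icc 1 (n-1), ∀ x ∈ Set.Ioc ((i:ℝ)/N) (((i:ℝ)+1)/N),
      N * L ≤ F x := by
    intro i hi x hx
    rw [hFval i hi x hx, hLdef, Finset.mul_sum]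
    apply Finset.sum_le_sum
    intro j hj
    have hd := hden i hi x hx j hj
    have hj1 : (1:ℝ) ≤ (j:ℝ) := (hiR j hj).1
    have hle : x + ((j:ℝ)-(i:ℝ))/N ≤ ((j:ℝ)+1)/N := by
      have h2 := hx.2
      have : x + ((j:ℝ)-(i:ℝ))/N = (x - ((i:ℝ)+1)/N) + ((j:ℝ)+1)/N := by ring
      rw [this]
      linarith
    have := one_div_le_one_div_of_le hd hle
    calc N * (1/((j:ℝ)+1)) = 1/(((j:ℝ)+1)/N) := by
          rw [one_div_div]; ring
      _ ≤ 1/(x + ((j:ℝ)-(i:ℝ))/N) := this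
  -- pointwise upper bound
  have hupp : ∀ v : ℝ, 0 < v → ∀ i ∈ Finset.Icc 1 (n-1),
      ∀ x ∈ Set.Ioc ((i:ℝ)/N) (((i:ℝ)+1)/N), ((i:ℝ)+v)/N ≤ x →
      F x ≤ N * ∑ j ∈ Finset.Icc 1 (n-1), 1/(v+(j:ℝ)) := by
    intro v hv i hi x hx hxv
    rw [hFval i hi x hx, Finset.mul_sum]
    apply Finset.sum_le_sum
    intro j hj
    have hj1 : (1:ℝ) ≤ (j:ℝ) := (hiR j hj).1
    have hge : (v+(j:ℝ))/N ≤ x + ((j:ℝ)-(i:ℝ))/N := by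
      have : x + ((j:ℝ)-(i:ℝ))/N = (x - ((i:ℝ)+v)/N) + (v+(j:ℝ))/N := by ring
      rw [this]
      linarith
    have hpos : (0:ℝ) < (v+(j:ℝ))/N := by positivity
    have := one_div_le_one_div_of_le hpos hge
    calc 1/(x + ((j:ℝ)-(i:ℝ))/N) ≤ 1/((v+(j:ℝ))/N) := this
      _ = N * (1/(v+(j:ℝ))) := by rw [one_div_div]; ring
  -- nonnegativity on the interval
  have hFnonneg : ∀ i ∈ Finset.Icc 1 (n-1), ∀ x ∈ Set.Ioc ((i:ℝ)/N) (((i:ℝ)+1)/N),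
      0 ≤ F x := by
    intro i hi x hx
    rw [hFval i hi x hx]
    apply Finset.sum_nonneg
    intro j hj
    have := hden i hi x hx j hj
    positivity
  -- global bound
  have hFub : ∀ x : ℝ, |F x| < (n:ℝ) * N := by
    intro x
    rcases hcases x with h | ⟨i, hi, hx⟩
    · rw [h, abs_zero]; positivity
    · rw [abs_of_nonneg (hFnonneg i hi x hx), hFval i hi x hx]
      have hb : ∀ j ∈ Finset.Icc 1 (n-1), 1/(x + ((j:ℝ)-(i:ℝ))/N) ≤ N := by
        intro j hj
        have hd := hden i hi x hx j hj
        have hj1 : (1:ℝ) ≤ (j:ℝ) := (hiR j hj).1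
        have h1 : (1:ℝ)/N ≤ x + ((j:ℝ)-(i:ℝ))/N := by
          have : x + ((j:ℝ)-(i:ℝ))/N = (x - (i:ℝ)/N) + (j:ℝ)/N := by ring
          rw [this]
          have h2 : (1:ℝ)/N ≤ (j:ℝ)/N := hdiv _ _ hj1
          have := hx.1
          linarith
        have := one_div_le_one_div_of_le (by positivity : (0:ℝ) < 1/N) h1
        rw [one_div_one_div] at this
        exact this
      calc (∑ j ∈ Finset.Icc 1 (n-1), 1/(x + ((j:ℝ)-(i:ℝ))/N))
          ≤ ∑ j ∈ Finset.Icc 1 (n-1), N := Finset.sum_le_sum hb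
        _ = ((n-1:ℕ):ℝ) * N := by rw [Finset.sum_const, hcard, nsmul_eq_mul]
        _ < (n:ℝ) * N := by
            rw [hmcast]
            have : (n:ℝ) - 1 < (n:ℝ) := by linarith
            exact mul_lt_mul_of_pos_right this hN0
  -- volume of the union of intervals
  have hvol : ∀ v : ℝ, 0 < v → v ≤ 1 →
      volume (⋃ i ∈ Finset.Icc 1 (n-1), Set.Ioo ((i:ℝ)/N) (((i:ℝ)+v)/N)) =
        ENNReal.ofReal (((n:ℝ)-1) * v / N) := by
    intro v hv hv1
    have hdisj : (↑(Finset.Icc 1 (n-1)) : Set ℕ).PairwiseDisjoint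
        (fun i => Set.Ioo ((i:ℝ)/N) (((i:ℝ)+v)/N)) := by
      intro a ha b hb hab
      simp only [Finset.coe_Icc, Set.mem_Icc] at ha hb
      apply Set.disjoint_left.mpr
      intro x hxa hxb
      rcases lt_or_gt_of_ne hab with hlt | hgt
      · have h1 : ((a:ℝ)+1) ≤ (b:ℝ) := by exact_mod_cast Nat.succ_le_of_lt hlt
        have h2 := hxa.2
        have h3 := hxb.1
        have h4 : ((a:ℝ)+v)/N ≤ (b:ℝ)/N :=
          hdiv _ _ (by linarith)
        linarith
      · have h1 : ((b:ℝ)+1) ≤ (a:ℝ) := by exact_mod_cast Nat.succ_le_of_lt hgt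
        have h2 := hxb.2
        have h3 := hxa.1
        have h4 : ((b:ℝ)+v)/N ≤ (a:ℝ)/N :=
          hdiv _ _ (by linarith)
        linarith
    rw [measure_biUnion_finset hdisj (fun i _ => measurableSet_Ioo)]
    have heach : ∀ i ∈ Finset.Icc 1 (n-1),
        volume (Set.Ioo ((i:ℝ)/N) (((i:ℝ)+v)/N)) = ENNReal.ofReal (v/N) := by
      intro i hi
      rw [Real.volume_Ioo]
      congr 1
      field_simp; ring
    rw [Finset.sum_congr rfl heach, Finset.sum_const, hcard, nsmul_eq_mul]
    rw [← ENNReal.ofReal_natCast, ← ENNReal.ofReal_mul (by positivity), hmcast]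
    congr 1
    ring
  -- distribution lower bound
  have hd_lb : ∀ s : ℝ, s < N * L →
      ENNReal.ofReal (((n:ℝ)-1)/N) ≤ distrib F s := by
    intro s hs
    have hsub : (⋃ i ∈ Finset.Icc 1 (n-1), Set.Ioo ((i:ℝ)/N) (((i:ℝ)+1)/N)) ⊆
        {x ∈ Set.Ioo (0:ℝ) 1 | s < |F x|} := by
      intro x hx
      simp only [Set.mem_iUnion] at hx
      obtain ⟨i, hi, hxi⟩ := hx
      have hxIoc : x ∈ Set.Ioc ((i:ℝ)/N) (((i:ℝ)+1)/N) := Set.Ioo_subset_Ioc_self hxi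
      have hi1 := (hiR i hi).1
      have hi2 := (hiR i hi).2
      constructor
      · constructor
        · have : (0:ℝ) < (i:ℝ)/N := by positivity
          linarith [hxi.1]
        · have h1 : ((i:ℝ)+1)/N ≤ (n:ℝ)/N := hdiv _ _ (by linarith)
          have h2 : (n:ℝ)/N ≤ 1 := by
            rw [div_le_one hN0]; exact hNn
          linarith [hxi.2]
      · rw [abs_of_nonneg (hFnonneg i hi x hxIoc)]
        linarith [hlow i hi x hxIoc]
    calc ENNReal.ofReal (((n:ℝ)-1)/N)
        = volume (⋃ i ∈ Finset.Icc 1 (n-1), Set.Ioo ((i:ℝ)/N) (((i:ℝ)+1)/N)) := by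
          rw [hvol 1 one_pos le_rfl]; congr 1; ring
      _ ≤ distrib F s := measure_mono hsub
  -- distribution upper bound at cutoff value
  have hd_ub : ∀ v : ℝ, 0 < v → v ≤ 1 →
      distrib F (N * ∑ j ∈ Finset.Icc 1 (n-1), 1/(v+(j:ℝ))) ≤
        ENNReal.ofReal (((n:ℝ)-1) * v / N) := by
    intro v hv hv1
    set s := N * ∑ j ∈ Finset.Icc 1 (n-1), 1/(v+(j:ℝ)) with hsdef
    have hspos : 0 < s := by
      apply mul_pos hN0
      apply Finset.sum_pos _ hIne
      intro j hj
      have := (hiR j hj).1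
      positivity
    have hsub : {x ∈ Set.Ioo (0:ℝ) 1 | s < |F x|} ⊆
        ⋃ i ∈ Finset.Icc 1 (n-1), Set.Ioo ((i:ℝ)/N) (((i:ℝ)+v)/N) := by
      intro x hx
      obtain ⟨hx01, hxs⟩ := hx
      rcases hcases x with h0 | ⟨i, hi, hxi⟩
      · rw [h0, abs_zero] at hxs; linarith
      · simp only [Set.mem_iUnion]
        refine ⟨i, hi, hxi.1, ?_⟩
        by_contra hge
        push_neg at hge
        have := hupp v hv i hi x hxi hge
        rw [abs_of_nonneg (hFnonneg i hi x hxi)] at hxs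
        linarith
    calc distrib F s ≤ volume (⋃ i ∈ Finset.Icc 1 (n-1),
          Set.Ioo ((i:ℝ)/N) (((i:ℝ)+v)/N)) := measure_mono hsub
      _ = ENNReal.ofReal (((n:ℝ)-1) * v / N) := hvol v hv hv1
  -- distribution support bound
  have hd_supp : ∀ s : ℝ, 0 < s → distrib F s ≤ ENNReal.ofReal (((n:ℝ)-1)/N) := by
    intro s hs
    have hsub : {x ∈ Set.Ioo (0:ℝ) 1 | s < |F x|} ⊆
        ⋃ i ∈ Finset.Icc 1 (n-1), Set.Ioc ((i:ℝ)/N) (((i:ℝ)+1)/N) := by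
      intro x hx
      obtain ⟨hx01, hxs⟩ := hx
      rcases hcases x with h0 | ⟨i, hi, hxi⟩
      · rw [h0, abs_zero] at hxs; linarith
      · simp only [Set.mem_iUnion]
        exact ⟨i, hi, hxi⟩
    calc distrib F s ≤ volume (⋃ i ∈ Finset.Icc 1 (n-1),
          Set.Ioc ((i:ℝ)/N) (((i:ℝ)+1)/N)) := measure_mono hsub
      _ ≤ ∑ i ∈ Finset.Icc 1 (n-1), volume (Set.Ioc ((i:ℝ)/N) (((i:ℝ)+1)/N)) :=
          measure_biUnion_finset_le _ _
      _ = ENNReal.ofReal (((n:ℝ)-1)/N) := by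
          have heach : ∀ i ∈ Finset.Icc 1 (n-1),
              volume (Set.Ioc ((i:ℝ)/N) (((i:ℝ)+1)/N)) = ENNReal.ofReal (1/N) := by
            intro i hi
            rw [Real.volume_Ioc]
            congr 1
            field_simp; ring
          rw [Finset.sum_congr rfl heach, Finset.sum_const, hcard, nsmul_eq_mul]
          rw [← ENNReal.ofReal_natCast, ← ENNReal.ofReal_mul (by positivity), hmcast]
          congr 1
          ring
  -- membership of the big value in the rearrangement set
  have hne : ∀ t : ℝ, ((n:ℝ)*N) ∈ {s : ℝ | 0 < s ∧ distrib F s ≤ ENNReal.ofReal t} := by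
    intro t
    constructor
    · positivity
    · have hempty : {x ∈ Set.Ioo (0:ℝ) 1 | (n:ℝ)*N < |F x|} = ∅ := by
        ext x
        simp only [Set.mem_setOf_eq, Set.mem_empty_iff_false, iff_false, not_and]
        intro _
        push_neg
        exact le_of_lt (hFub x)
      rw [distrib, hempty, measure_empty]
      exact zero_le
  have hbdd : ∀ t : ℝ, BddBelow {s : ℝ | 0 < s ∧ distrib F s ≤ ENNReal.ofReal t} :=
    fun t => ⟨0, fun x hx => le_of_lt hx.1⟩
  -- rearrangement lower bound
  have hrearr_ge : ∀ t : ℝ, 0 < t → t < ((n:ℝ)-1)/N → N * L ≤ rearr F t := by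
    intro t ht htlt
    apply le_csInf ⟨_, hne t⟩
    intro s hs
    by_contra hlt
    push_neg at hlt
    have h1 := hd_lb s hlt
    have h2 := hs.2
    have h3 : ENNReal.ofReal t < ENNReal.ofReal (((n:ℝ)-1)/N) :=
      (ENNReal.ofReal_lt_ofReal_iff (by apply div_pos <;> linarith)).mpr htlt
    exact absurd (le_trans h1 h2) (not_le.mpr h3)
  -- rearrangement nonneg
  have hrearr_nonneg : ∀ t : ℝ, 0 ≤ rearr F t := by
    intro t
    apply le_csInf ⟨_, hne t⟩
    intro s hs
    exact le_of_lt hs.1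
  -- rearrangement upper bound
  have hrearr_le : ∀ t : ℝ, ∀ s : ℝ, 0 < s → distrib F s ≤ ENNReal.ofReal t →
      rearr F t ≤ s := by
    intro t s hs hds
    exact csInf_le (hbdd t) ⟨hs, hds⟩
  constructor
  · -- LOWER BOUND
    set t₀ : ℝ := ((n:ℝ) * Real.log n / 2)/(N*L) with ht₀def
    have hNL : 0 < N * L := mul_pos hN0 hLpos
    have hnum := numeric n hn
    have ht₀pos : 0 < t₀ := by
      apply div_pos _ hNL
      positivity
    have hkey : t₀ * (N*L) = (n:ℝ) * Real.log n / 2 := by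
      rw [ht₀def]
      field_simp
    have ht₀T : t₀ < ((n:ℝ)-1)/N := by
      rw [ht₀def, div_lt_div_iff₀ hNL hN0]
      calc (n:ℝ) * Real.log n / 2 * N < (((n:ℝ)-1) * L) * N := by
            apply mul_lt_mul_of_pos_right _ hN0
            exact hnum
        _ = ((n:ℝ)-1) * (N*L) := by ring
    have ht₀1 : t₀ < 1 := by
      have h1 : ((n:ℝ)-1)/N ≤ ((n:ℝ)-1)/(n:ℝ) :=
        div_le_div_of_nonneg_left (by linarith) (by linarith) hNn
      have h2 : ((n:ℝ)-1)/(n:ℝ) < 1 := by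
        rw [div_lt_one (by linarith)]; linarith
      linarith
    rw [wnorm]
    apply le_iSup₂_of_le t₀ ⟨ht₀pos, ht₀1⟩
    apply ENNReal.ofReal_le_ofReal
    have hge := hrearr_ge t₀ ht₀pos ht₀T
    calc (n:ℝ) * Real.log n / 2 = t₀ * (N*L) := hkey.symm
      _ ≤ t₀ * rearr F t₀ := mul_le_mul_of_nonneg_left hge (le_of_lt ht₀pos)
  · -- UPPER BOUND
    rw [wnorm]
    apply iSup₂_le
    intro t ht
    obtain ⟨ht0, ht1⟩ := ht
    apply ENNReal.ofReal_le_ofReal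
    by_cases hcase : t < ((n:ℝ)-1)/N
    · set v₀ : ℝ := t*N/((n:ℝ)-1) with hv₀def
      have hn1pos : (0:ℝ) < (n:ℝ)-1 := by linarith
      have hv₀pos : 0 < v₀ := by positivity
      have htN : t * N < (n:ℝ)-1 := (lt_div_iff₀ hN0).mp hcase
      have hv₀lt : v₀ < 1 := (div_lt_one hn1pos).mpr htN
      have hv₀le : v₀ ≤ 1 := le_of_lt hv₀lt
      have hs := hd_ub v₀ hv₀pos hv₀le
      have heq : ((n:ℝ)-1) * v₀ / N = t := by
        rw [hv₀def]
        field_simp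
        try ring
      rw [heq] at hs
      have hsum_pos : 0 < ∑ j ∈ Finset.Icc 1 (n-1), 1/(v₀+(j:ℝ)) := by
        apply Finset.sum_pos _ hIne
        intro j hj
        have := (hiR j hj).1
        positivity
      have hr := hrearr_le t _ (mul_pos hN0 hsum_pos) hs
      have htNeq : t * N = ((n:ℝ)-1) * v₀ := by
        rw [hv₀def]
        field_simp
        try ring
      have hterm : ∀ j ∈ Finset.Icc 1 (n-1), v₀/(v₀+(j:ℝ)) ≤ 1/((j:ℝ)+1) := by
        intro j hj
        have hj1 : (1:ℝ) ≤ (j:ℝ) := (hiR j hj).1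
        rw [div_le_div_iff₀ (by positivity) (by positivity)]
        nlinarith
      calc t * rearr F t
          ≤ t * (N * ∑ j ∈ Finset.Icc 1 (n-1), 1/(v₀+(j:ℝ))) :=
            mul_le_mul_of_nonneg_left hr (le_of_lt ht0)
        _ = ((n:ℝ)-1) * ∑ j ∈ Finset.Icc 1 (n-1), v₀/(v₀+(j:ℝ)) := by
            rw [Finset.mul_sum, Finset.mul_sum, Finset.mul_sum]
            apply Finset.sum_congr rfl
            intro j hj
            rw [← mul_assoc, htNeq, mul_one_div, mul_div_assoc]
        _ ≤ ((n:ℝ)-1) * L := by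
            apply mul_le_mul_of_nonneg_left _ (by linarith)
            exact Finset.sum_le_sum hterm
        _ ≤ ((n:ℝ)-1) * Real.log n :=
            mul_le_mul_of_nonneg_left hLle (by linarith)
        _ ≤ (n:ℝ) * Real.log n := by nlinarith
    · push_neg at hcase
      have hzero : rearr F t ≤ 0 := by
        by_contra h
        push_neg at h
        have := hrearr_le t (rearr F t / 2) (by linarith)
          (le_trans (hd_supp _ (by linarith)) (ENNReal.ofReal_le_ofReal hcase))
        linarith
      have := hrearr_nonneg t
      have heq0 : rearr F t = 0 := le_antisymm hzero this
      rw [heq0, mul_zero]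
      positivity
end

section
/- Let $n \ge 2$ and $F(t) = \sum_{m=1}^{2^{n-1}} n^m (\log n)\, \chi_{(\frac{1}{n^m},\frac{1}{n^{m-1}}]}(t)$, a step function on $(0,1)$. Then $\|F\|_{1,\infty} = \sup_{t \in (0,1)} t F^*(t) \le n \log n$. -/
open MeasureTheory Set

theorem stmt4 (n : ℕ) (hn : 2 ≤ n)
    (F : ℝ → ℝ)
    (hF : ∀ t : ℝ, F t = ∑ m ∈ Finset.Icc 1 (2 ^ (n - 1)),
      (Set.Ioc (1 / (n : ℝ) ^ m) (1 / (n : ℝ) ^ (m - 1))).indicator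
        (fun _ => (n : ℝ) ^ m * Real.log n) t) :
    wnorm F ≤ ENNReal.ofReal ((n : ℝ) * Real.log n) := by
  have hc1 : (1 : ℝ) < n := by exact_mod_cast hn.trans_lt' one_lt_two
  have hc0 : (0 : ℝ) < n := by linarith
  have hlog : 0 < Real.log n := Real.log_pos hc1
  set M : ℕ := 2 ^ (n - 1) with hM
  have hM1 : 1 ≤ M := Nat.one_le_two_pow
  -- value of F on each interval
  have hval : ∀ x m₀, m₀ ∈ Finset.Icc 1 M →
      x ∈ Set.Ioc (1 / (n : ℝ) ^ m₀) (1 / (n : ℝ) ^ (m₀ - 1)) →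
      F x = (n : ℝ) ^ m₀ * Real.log n := by
    intro x m₀ hm₀ hx
    rw [hF, Finset.sum_eq_single_of_mem m₀ hm₀]
    · rw [Set.indicator_of_mem hx]
    · intro m hm hne
      apply Set.indicator_of_notMem
      intro hxm
      rcases lt_or_gt_of_ne hne with h | h
      · have hle : (1 : ℝ) / (n : ℝ) ^ (m₀ - 1) ≤ 1 / (n : ℝ) ^ m := by
          apply one_div_le_one_div_of_le (by positivity)
          exact pow_le_pow_right₀ hc1.le (by omega)
        exact absurd hxm.1 (not_lt.2 (hx.2.trans hle))
      · have hle : (1 : ℝ) / (n : ℝ) ^ (m - 1) ≤ 1 / (n : ℝ) ^ m₀ := by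
          apply one_div_le_one_div_of_le (by positivity)
          exact pow_le_pow_right₀ hc1.le (by omega)
        exact absurd hx.1 (not_lt.2 (hxm.2.trans hle))
  have hcases : ∀ x, F x = 0 ∨ ∃ m₀ ∈ Finset.Icc 1 M,
      x ∈ Set.Ioc (1 / (n : ℝ) ^ m₀) (1 / (n : ℝ) ^ (m₀ - 1)) ∧
      F x = (n : ℝ) ^ m₀ * Real.log n := by
    intro x
    by_cases h : ∃ m₀ ∈ Finset.Icc 1 M,
        x ∈ Set.Ioc (1 / (n : ℝ) ^ m₀) (1 / (n : ℝ) ^ (m₀ - 1))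
    · obtain ⟨m₀, hm, hx⟩ := h
      exact Or.inr ⟨m₀, hm, hx, hval x m₀ hm hx⟩
    · push_neg at h
      refine Or.inl ?_
      rw [hF]
      exact Finset.sum_eq_zero fun m hm => Set.indicator_of_notMem (h m hm) _
  have hnonneg : ∀ x, 0 ≤ F x := by
    intro x
    rcases hcases x with h | ⟨m₀, _, _, h⟩
    · rw [h]
    · rw [h]; positivity
  have hbound : ∀ (j : ℕ) x, 1 / (n : ℝ) ^ j < x → F x ≤ (n : ℝ) ^ j * Real.log n := by
    intro j x hx
    rcases hcases x with h | ⟨m₀, hm₀, hxm, h⟩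
    · rw [h]; positivity
    · rw [h]
      have h1 : (1 : ℝ) / (n : ℝ) ^ j < 1 / (n : ℝ) ^ (m₀ - 1) := lt_of_lt_of_le hx hxm.2
      have h2 : (n : ℝ) ^ (m₀ - 1) < (n : ℝ) ^ j := by
        rw [div_lt_div_iff₀ (by positivity) (by positivity)] at h1
        linarith
      have h3 : m₀ - 1 < j := by
        by_contra hc
        push_neg at hc
        exact absurd h2 (not_lt.2 (pow_le_pow_right₀ hc1.le hc))
      have h4 : (n : ℝ) ^ m₀ ≤ (n : ℝ) ^ j := by
        apply pow_le_pow_right₀ hc1.le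
        simp only [Finset.mem_Icc] at hm₀
        omega
      exact mul_le_mul_of_nonneg_right h4 hlog.le
  have hboundM : ∀ x, F x ≤ (n : ℝ) ^ M * Real.log n := by
    intro x
    rcases hcases x with h | ⟨m₀, hm₀, _, h⟩
    · rw [h]; positivity
    · rw [h]
      simp only [Finset.mem_Icc] at hm₀
      exact mul_le_mul_of_nonneg_right (pow_le_pow_right₀ hc1.le hm₀.2) hlog.le
  -- main argument
  rw [wnorm]
  refine iSup₂_le fun t ht => ?_
  obtain ⟨ht0, ht1⟩ := ht
  have hinv1 : (1 : ℝ) / n < 1 := by rw [div_lt_one hc0]; exact hc1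
  have hex : ∃ k : ℕ, ((1 : ℝ) / n) ^ k < t := exists_pow_lt_of_lt_one ht0 hinv1
  set k := Nat.find hex with hkdef
  have hk : ((1 : ℝ) / n) ^ k < t := Nat.find_spec hex
  have hk1 : 1 ≤ k := by
    rcases Nat.eq_zero_or_pos k with h | h
    · rw [h] at hk; simp at hk; linarith
    · exact h
  have hk' : t ≤ ((1 : ℝ) / n) ^ (k - 1) := by
    have := Nat.find_min hex (show k - 1 < k by omega)
    linarith [not_lt.1 this]
  set j := min k M with hjdef
  have hj1 : 1 ≤ j := le_min hk1 hM1
  have hjk : j ≤ k := min_le_left _ _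
  set s := (n : ℝ) ^ j * Real.log n with hsdef
  have hs_pos : 0 < s := mul_pos (by positivity) hlog
  have hdist : distrib F s ≤ ENNReal.ofReal t := by
    rcases le_or_gt k M with hkM | hMk
    · have hj : j = k := min_eq_left hkM
      have hsub : {x ∈ Set.Ioo (0 : ℝ) 1 | s < |F x|} ⊆ Set.Ioc 0 (1 / (n : ℝ) ^ k) := by
        rintro x ⟨hx, hFx⟩
        refine ⟨hx.1, ?_⟩
        by_contra hxk
        push_neg at hxk
        have hb := hbound k x hxk
        rw [abs_of_nonneg (hnonneg x)] at hFx
        rw [hj] at hsdef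
        rw [hsdef] at hFx
        linarith
      calc distrib F s ≤ volume (Set.Ioc 0 (1 / (n : ℝ) ^ k)) := measure_mono hsub
        _ = ENNReal.ofReal (1 / (n : ℝ) ^ k - 0) := Real.volume_Ioc
        _ ≤ ENNReal.ofReal t := by
            apply ENNReal.ofReal_le_ofReal
            rw [sub_zero]
            rw [← one_div_pow] at *
            linarith
    · have hj : j = M := min_eq_right hMk.le
      have hempty : {x ∈ Set.Ioo (0 : ℝ) 1 | s < |F x|} = ∅ := by
        ext x
        simp only [Set.mem_setOf_eq, Set.mem_empty_iff_false, iff_false, not_and]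
        intro _
        rw [abs_of_nonneg (hnonneg x), hsdef, hj]
        exact not_lt.2 (hboundM x)
      rw [distrib, hempty, measure_empty]
      exact zero_le
  have hrearr : rearr F t ≤ s :=
    csInf_le ⟨0, fun y hy => hy.1.le⟩ ⟨hs_pos, hdist⟩
  apply ENNReal.ofReal_le_ofReal
  have h1 : t * rearr F t ≤ t * s := mul_le_mul_of_nonneg_left hrearr ht0.le
  have h2 : t ≤ ((1 : ℝ) / n) ^ (j - 1) := by
    refine hk'.trans (pow_le_pow_of_le_one (by positivity) hinv1.le (by omega))
  have h3 : ((1 : ℝ) / n) ^ (j - 1) * s = (n : ℝ) * Real.log n := by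
    rw [hsdef, one_div_pow]
    have hpj : (n : ℝ) ^ j = (n : ℝ) ^ (j - 1) * n := by
      rw [← pow_succ]
      congr 1
      omega
    rw [hpj]
    have hne : (n : ℝ) ^ (j - 1) ≠ 0 := by positivity
    field_simp
  have h4 : t * s ≤ ((1 : ℝ) / n) ^ (j - 1) * s :=
    mul_le_mul_of_nonneg_right h2 hs_pos.le
  linarith
end

section
/- The weak-$L^1$ space $L_{1,\infty}(0,1)$ does not have type $1$: for every constant $K > 0$ there exist finitely many functions $g_1, \dots, g_n \in L_{1,\infty}(0,1)$ such that $\int_0^1 \|\sum_{k=1}^n r_k(t) g_k\|_{1,\infty} dt > K \sum_{k=1}^n \|g_k\|_{1,\infty}$. -/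
open MeasureTheory Set

open Real in
/-- The Rademacher functions `r_k(t) = sign (sin (2^k π t))`. -/
noncomputable def rademacher (k : ℕ) (t : ℝ) : ℝ :=
  Real.sign (Real.sin (2 ^ k * π * t))

namespace S9

/-- geometric scale -/
noncomputable def bet (m : ℕ) : ℝ := ((2:ℝ))⁻¹ ^ (m+2)

lemma bet_pos (m : ℕ) : 0 < bet m := by unfold bet; positivity

lemma bet_le_half (m : ℕ) : bet m ≤ 1/2 := by
  unfold bet
  calc ((2:ℝ))⁻¹ ^ (m+2) ≤ (2:ℝ)⁻¹ ^ 1 := by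
        apply pow_le_pow_of_le_one (by norm_num) (by norm_num) (by omega)
    _ = 1/2 := by norm_num

noncomputable def ell (m j : ℕ) : ℝ := bet m ^ (j+1)

lemma ell_pos (m j : ℕ) : 0 < ell m j := pow_pos (bet_pos m) _

lemma ell_anti (m : ℕ) {j j' : ℕ} (h : j ≤ j') : ell m j' ≤ ell m j :=
  pow_le_pow_of_le_one (bet_pos m).le ((bet_le_half m).trans (by norm_num)) (by omega)

noncomputable def off (m j : ℕ) : ℝ := ∑ k ∈ Finset.range j, ell m k

lemma off_nonneg (m j : ℕ) : 0 ≤ off m j :=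
  Finset.sum_nonneg fun k _ => (ell_pos m k).le

lemma geom_le (m r : ℕ) : ∑ k ∈ Finset.range r, bet m ^ k ≤ 2 - 2 * bet m ^ r := by
  induction r with
  | zero => simp
  | succ r ih =>
      rw [Finset.sum_range_succ, pow_succ]
      have h2 : 2 * (bet m ^ r * bet m) ≤ bet m ^ r := by
        have := mul_le_mul_of_nonneg_left (bet_le_half m) (le_of_lt (pow_pos (bet_pos m) r))
        nlinarith [pow_pos (bet_pos m) r]
      linarith

lemma sum_ell_le (m r : ℕ) : ∑ k ∈ Finset.range r, ell m k ≤ 2 * bet m := by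
  have : ∑ k ∈ Finset.range r, ell m k = bet m * ∑ k ∈ Finset.range r, bet m ^ k := by
    rw [Finset.mul_sum]; apply Finset.sum_congr rfl; intro k _; rw [ell, pow_succ']
  rw [this]
  have := geom_le m r
  have hb := bet_pos m
  nlinarith [pow_pos (bet_pos m) r]

lemma off_add_ell_le (m : ℕ) {j j' : ℕ} (h : j < j') : off m j + ell m j ≤ off m j' := by
  have : off m j + ell m j = ∑ k ∈ Finset.range (j+1), ell m k := by
    rw [Finset.sum_range_succ, off]
  rw [this, off]
  apply Finset.sum_le_sum_of_subset_of_nonneg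
  · exact Finset.range_subset_range.2 (by omega)
  · intro k _ _; exact (ell_pos m k).le

lemma off_add_ell_le_half (m j : ℕ) : off m j + ell m j ≤ 1/2 := by
  have h1 : off m j + ell m j = ∑ k ∈ Finset.range (j+1), ell m k := by
    rw [Finset.sum_range_succ, off]
  rw [h1]
  calc ∑ k ∈ Finset.range (j+1), ell m k ≤ 2 * bet m := sum_ell_le m _
    _ ≤ 2 * (1/2 * (1/2)) := by
        have : bet m ≤ 1/4 := by
          unfold bet
          calc ((2:ℝ))⁻¹ ^ (m+2) ≤ (2:ℝ)⁻¹ ^ 2 := by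
                apply pow_le_pow_of_le_one (by norm_num) (by norm_num) (by omega)
            _ = 1/4 := by norm_num
        linarith
    _ = 1/2 := by norm_num

lemma tail_ell_le (m a r : ℕ) : ∑ k ∈ Finset.Ico a r, ell m k ≤ 2 * bet m ^ (a+1) := by
  rw [Finset.sum_Ico_eq_sum_range]
  have : ∀ i ∈ Finset.range (r - a), ell m (a + i) = bet m ^ (a+1) * bet m ^ i := by
    intro i _; rw [ell, ← pow_add]; ring_nf
  rw [Finset.sum_congr rfl this, ← Finset.mul_sum]
  have h2 := geom_le m (r - a)
  have hb := pow_pos (bet_pos m) (a+1)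
  nlinarith [pow_pos (bet_pos m) (r-a), pow_nonneg (bet_pos m).le (a+1)]

/-- truncated hyperbola profile -/
noncomputable def Sfun (m : ℕ) (z : ℝ) : ℝ := if ((2:ℝ))⁻¹^m ≤ z ∧ z < 1 then z⁻¹ else 0

lemma Sfun_nonneg (m : ℕ) (z : ℝ) : 0 ≤ Sfun m z := by
  unfold Sfun; split
  · next h => exact inv_nonneg.2 (le_trans (by positivity) h.1)
  · exact le_refl 0

lemma Sfun_le_inv (m : ℕ) {z : ℝ} (hz : 0 < z) : Sfun m z ≤ z⁻¹ := by
  unfold Sfun; split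
  · exact le_refl _
  · exact inv_nonneg.2 hz.le

lemma Sfun_le_pow (m : ℕ) (z : ℝ) : Sfun m z ≤ 2^m := by
  unfold Sfun; split
  · next h =>
      have h0 : (0:ℝ) < ((2:ℝ))⁻¹^m := by positivity
      rw [← inv_inv ((2:ℝ)^m)]
      apply inv_anti₀ (by positivity)
      · rw [← inv_pow]; exact h.1
  · positivity

lemma Sfun_eq_zero (m : ℕ) {z : ℝ} (h : ¬ (0 < z ∧ z < 1)) : Sfun m z = 0 := by
  unfold Sfun
  rw [if_neg]
  intro ⟨h1, h2⟩
  exact h ⟨lt_of_lt_of_le (by positivity) h1, h2⟩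

lemma Sfun_eq (m : ℕ) {z : ℝ} (h1 : ((2:ℝ))⁻¹^m ≤ z) (h2 : z < 1) : Sfun m z = z⁻¹ :=
  if_pos ⟨h1, h2⟩


/-- the kernel of function `i` in region `j` -/
noncomputable def u (m j i : ℕ) (x : ℝ) : ℝ :=
  (2 / ell m j) * Sfun m (2*(x - off m j)/ell m j - i/m)

lemma u_nonneg (m j i : ℕ) (x : ℝ) : 0 ≤ u m j i x :=
  mul_nonneg (div_nonneg (by norm_num) (ell_pos m j).le) (Sfun_nonneg _ _)

lemma u_support {m j i : ℕ} (hi : i < m) {x : ℝ} (h : u m j i x ≠ 0) :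
    off m j < x ∧ x < off m j + ell m j := by
  have hl := ell_pos m j
  have hm : (0:ℝ) < m := by exact_mod_cast Nat.zero_lt_of_lt hi
  have him : (0:ℝ) ≤ (i:ℝ) / m := by positivity
  have him1 : (i:ℝ) / m < 1 := by
    rw [div_lt_one hm]; exact_mod_cast hi
  set z := 2*(x - off m j)/ell m j - i/m with hz
  have hS : Sfun m z ≠ 0 := by
    intro h0; apply h; rw [u, ← hz, h0, mul_zero]
  have hz01 : 0 < z ∧ z < 1 := by
    by_contra hc; exact hS (Sfun_eq_zero m hc)
  have hzx : 2*(x - off m j) = ell m j * (z + i/m) := by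
    rw [hz]; field_simp; ring
  clear_value z
  constructor
  · nlinarith [hz01.1, mul_pos hl hz01.1, mul_nonneg hl.le him]
  · have h2 : ell m j * (z + i/m) < ell m j * 2 := by
      apply mul_lt_mul_of_pos_left _ hl
      linarith [hz01.2, him1]
    nlinarith

lemma u_le_global (m j i : ℕ) (x : ℝ) : u m j i x ≤ 2^(m+1) / ell m j := by
  have hl := ell_pos m j
  rw [u]
  calc (2 / ell m j) * Sfun m _ ≤ (2 / ell m j) * 2^m := by
        apply mul_le_mul_of_nonneg_left (Sfun_le_pow m _)
          (div_nonneg (by norm_num) hl.le)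
    _ = 2^(m+1) / ell m j := by rw [pow_succ]; ring

lemma u_level {m j i : ℕ} {s x : ℝ} (hs : 0 < s) (h : s < u m j i x) :
    x ∈ Ioo (off m j + ell m j / 2 * (i/m))
      (off m j + ell m j / 2 * (i/m) + min (ell m j / 2) s⁻¹) := by
  have hl := ell_pos m j
  set z := 2*(x - off m j)/ell m j - i/m with hz
  have hu : u m j i x = (2 / ell m j) * Sfun m z := by rw [u]
  have hSpos : 0 < Sfun m z := by
    rcases (Sfun_nonneg m z).lt_or_eq with h'|h'
    · exact h'
    · exfalso; rw [hu, ← h', mul_zero] at h; exact absurd (hs.trans h) (lt_irrefl 0)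
  have hz01 : 0 < z ∧ z < 1 := by
    by_contra hc
    rw [Sfun_eq_zero m hc] at hSpos; exact lt_irrefl 0 hSpos
  have hSle : Sfun m z ≤ z⁻¹ := Sfun_le_inv m hz01.1
  have hkey : s * (ell m j * z) < 2 := by
    have h2 : s < (2 / ell m j) * z⁻¹ := by
      calc s < u m j i x := h
        _ ≤ (2 / ell m j) * z⁻¹ := by
            rw [hu]
            exact mul_le_mul_of_nonneg_left hSle (div_nonneg (by norm_num) hl.le)
    have h3 : s * (ell m j * z) < ((2 / ell m j) * z⁻¹) * (ell m j * z) := by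
      apply mul_lt_mul_of_pos_right h2 (mul_pos hl hz01.1)
    calc s * (ell m j * z) < ((2 / ell m j) * z⁻¹) * (ell m j * z) := h3
      _ = 2 := by field_simp [hl.ne', hz01.1.ne']
  have hxz : x - (off m j + ell m j/2*((i:ℝ)/m)) = ell m j/2 * z := by
    rw [hz]; field_simp; ring
  clear_value z
  constructor
  · nlinarith [mul_pos (show (0:ℝ) < ell m j / 2 by positivity) hz01.1]
  · have hub : ell m j / 2 * z < min (ell m j / 2) s⁻¹ := by
      rw [lt_min_iff]
      constructor
      · nlinarith [mul_lt_mul_of_pos_left hz01.2 (show (0:ℝ) < ell m j/2 by positivity)]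
      · rw [← one_div, lt_div_iff₀ hs]
        nlinarith [hkey]
    nlinarith [hub]


noncomputable def sg (m : ℕ) (i : Fin m) (j : Fin (2^m)) : ℝ :=
  if finFunctionFinEquiv.symm j i = (1 : Fin 2) then 1 else -1

lemma sg_cases (m : ℕ) (i : Fin m) (j : Fin (2^m)) : sg m i j = 1 ∨ sg m i j = -1 := by
  unfold sg; split
  · exact Or.inl rfl
  · exact Or.inr rfl

noncomputable def g (m : ℕ) (i : Fin m) (x : ℝ) : ℝ :=
  ∑ j : Fin (2^m), sg m i j * u m j.1 i.1 x

lemma measurable_Sfun (m : ℕ) : Measurable (Sfun m) := by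
  unfold Sfun
  have : MeasurableSet {z : ℝ | ((2:ℝ))⁻¹^m ≤ z ∧ z < 1} := by
    have : {z : ℝ | ((2:ℝ))⁻¹^m ≤ z ∧ z < 1} = Ico (((2:ℝ))⁻¹^m) 1 := rfl
    rw [this]; exact measurableSet_Ico
  exact Measurable.ite this (measurable_inv) measurable_const

lemma measurable_u (m j i : ℕ) : Measurable (u m j i) := by
  unfold u
  apply Measurable.const_mul
  apply (measurable_Sfun m).comp
  fun_prop

lemma measurable_g (m : ℕ) (i : Fin m) : Measurable (g m i) := by
  unfold g
  apply Finset.measurable_sum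
  intro j _
  exact (measurable_u m j.1 i.1).const_mul _

lemma u_disj {m i : ℕ} (hi : i < m) {j j' : ℕ} {x : ℝ}
    (hu : u m j i x ≠ 0) (hu' : u m j' i x ≠ 0) : j = j' := by
  have h1 := u_support hi hu
  have h2 := u_support hi hu'
  rcases lt_trichotomy j j' with h|h|h
  · exact absurd (off_add_ell_le m h) (by nlinarith [h1.2, h2.1])
  · exact h
  · exact absurd (off_add_ell_le m h) (by nlinarith [h2.2, h1.1])

lemma g_eq_single {m : ℕ} (i : Fin m) (J : Fin (2^m)) {x : ℝ}
    (hx : ∀ j : Fin (2^m), j ≠ J → u m j.1 i.1 x = 0) :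
    g m i x = sg m i J * u m J.1 i.1 x := by
  unfold g
  apply Finset.sum_eq_single
  · intro j _ hne; rw [hx j hne, mul_zero]
  · intro h; exact absurd (Finset.mem_univ J) h

lemma abs_g_level {m : ℕ} (hm : 0 < m) (i : Fin m) {s x : ℝ} (hs : 0 < s)
    (h : s < |g m i x|) : ∃ j : Fin (2^m), s < u m j.1 i.1 x := by
  by_cases hz : ∀ j : Fin (2^m), u m j.1 i.1 x = 0
  · exfalso
    have : g m i x = 0 := by
      unfold g; apply Finset.sum_eq_zero; intro j _; rw [hz j, mul_zero]
    rw [this, abs_zero] at h; exact absurd (hs.trans h) (lt_irrefl 0)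
  · push_neg at hz
    obtain ⟨J, hJ⟩ := hz
    refine ⟨J, ?_⟩
    have hsingle : g m i x = sg m i J * u m J.1 i.1 x := by
      apply g_eq_single
      intro j hne
      by_contra hu
      exact hne (Fin.ext (u_disj i.2 hu hJ))
    have habs : |g m i x| = u m J.1 i.1 x := by
      rw [hsingle, abs_mul]
      rcases sg_cases m i J with h1|h1 <;>
        rw [h1] <;> simp [abs_of_nonneg (u_nonneg m J.1 i.1 x)]
    rwa [habs] at h

lemma bet_mul_pow (m : ℕ) : bet m * 2^(m+1) = 1/2 := by
  unfold bet
  rw [inv_pow]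
  rw [show (2:ℝ)^(m+2) = 2^(m+1) * 2 by rw [pow_succ]]
  field_simp

lemma sum_b_le (m : ℕ) {s : ℝ} (hs : 0 < s) (L : ℕ) :
    ∑ j ∈ Finset.range L,
      (if ell m j < 2^(m+1)/s then min (ell m j / 2) s⁻¹ else 0) ≤ 2/s := by
  have hex : ∃ j, ell m j < 2^(m+1)/s := by
    obtain ⟨n, hn⟩ := exists_pow_lt_of_lt_one (show (0:ℝ) < 2^(m+1)/s by positivity)
      (show bet m < 1 from lt_of_le_of_lt (bet_le_half m) (by norm_num))
    exact ⟨n, lt_of_le_of_lt (pow_le_pow_of_le_one (bet_pos m).le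
      ((bet_le_half m).trans (by norm_num)) (by omega)) hn⟩
  obtain ⟨j₀, hP0, hmin⟩ : ∃ j₀, ell m j₀ < 2^(m+1)/s ∧ ∀ j < j₀, ¬ (ell m j < 2^(m+1)/s) :=
    ⟨Nat.find hex, Nat.find_spec hex, fun j hj => Nat.find_min hex hj⟩
  have h_each : ∀ j ∈ Finset.range L,
      (if ell m j < 2^(m+1)/s then min (ell m j / 2) s⁻¹ else 0) ≤
      (if j = j₀ then s⁻¹ else 0) + (if j₀ < j then ell m j / 2 else 0) := by
    intro j _
    rcases lt_trichotomy j j₀ with h|h|h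
    · rw [if_neg (hmin j h), if_neg (by omega), if_neg (by omega)]; norm_num
    · rw [if_pos (h ▸ hP0), if_pos h, if_neg (show ¬ j₀ < j by omega), add_zero]
      exact min_le_right _ _
    · rw [if_neg (show ¬ j = j₀ by omega), if_pos h, zero_add]
      split
      · exact min_le_left _ _
      · linarith [ell_pos m j]
  calc ∑ j ∈ Finset.range L, (if ell m j < 2^(m+1)/s then min (ell m j / 2) s⁻¹ else 0)
      ≤ ∑ j ∈ Finset.range L,
        ((if j = j₀ then s⁻¹ else 0) + (if j₀ < j then ell m j / 2 else 0)) :=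
        Finset.sum_le_sum h_each
    _ = (∑ j ∈ Finset.range L, if j = j₀ then s⁻¹ else 0)
        + ∑ j ∈ Finset.range L, (if j₀ < j then ell m j / 2 else 0) := Finset.sum_add_distrib
    _ ≤ 1/s + (1/s)/2 := by
        gcongr
        · rw [Finset.sum_ite_eq' (Finset.range L) j₀ (fun _ => s⁻¹)]
          rw [inv_eq_one_div] at *
          split
          · exact le_refl _
          · positivity
        · rw [Finset.sum_ite, Finset.sum_const_zero, add_zero]
          have hfil : (Finset.range L).filter (fun j => j₀ < j) = Finset.Ico (j₀+1) L := by
            ext j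
            simp only [Finset.mem_filter, Finset.mem_range, Finset.mem_Ico]
            omega
          rw [hfil]
          have h1 : ∑ j ∈ Finset.Ico (j₀+1) L, ell m j / 2
              = (∑ j ∈ Finset.Ico (j₀+1) L, ell m j) / 2 := by
            rw [Finset.sum_div]
          rw [h1]
          have h2 := tail_ell_le m (j₀+1) L
          have h3 : 2 * bet m ^ ((j₀+1) + 1) ≤ 1/s := by
            calc 2 * bet m ^ ((j₀+1) + 1) = 2 * (bet m * ell m j₀) := by
                  rw [ell, ← pow_succ']
              _ ≤ 2 * (bet m * (2^(m+1)/s)) := by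
                  have := mul_le_mul_of_nonneg_left hP0.le (bet_pos m).le
                  linarith
              _ = 2 * ((bet m * 2^(m+1))/s) := by ring
              _ = 2 * ((1/2)/s) := by rw [bet_mul_pow]
              _ = 1/s := by ring
          linarith
    _ ≤ 2/s := by
        have e1 : 2/s - (1/s + (1/s)/2) = (1/2)*(1/s) := by
          field_simp; ring
        have h8 : (0:ℝ) ≤ (1/2)*(1/s) := by positivity
        linarith


lemma distrib_g_le (m : ℕ) (i : Fin m) {s : ℝ} (hs : 0 < s) :
    distrib (g m i) s ≤ ENNReal.ofReal (2/s) := by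
  have hm : 0 < m := i.pos
  have hsub : {x ∈ Ioo (0:ℝ) 1 | s < |g m i x|} ⊆
      ⋃ j ∈ (Finset.univ : Finset (Fin (2^m))), {x : ℝ | s < u m j.1 i.1 x} := by
    rintro x ⟨_, hx⟩
    obtain ⟨j, hj⟩ := abs_g_level hm i hs hx
    exact Set.mem_biUnion (Finset.mem_univ j) hj
  calc distrib (g m i) s
      ≤ volume (⋃ j ∈ (Finset.univ : Finset (Fin (2^m))), {x : ℝ | s < u m j.1 i.1 x}) :=
        measure_mono hsub
    _ ≤ ∑ j : Fin (2^m), volume {x : ℝ | s < u m j.1 i.1 x} :=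
        measure_biUnion_finset_le _ _
    _ ≤ ∑ j : Fin (2^m),
        ENNReal.ofReal (if ell m j.1 < 2^(m+1)/s then min (ell m j.1 / 2) s⁻¹ else 0) := by
        apply Finset.sum_le_sum; intro j _
        split
        · next h =>
            have hsub2 : {x : ℝ | s < u m j.1 i.1 x} ⊆
                Ioo (off m j.1 + ell m j.1 / 2 * ((i.1:ℝ)/m))
                  (off m j.1 + ell m j.1 / 2 * ((i.1:ℝ)/m) + min (ell m j.1/2) s⁻¹) :=
              fun x hx => u_level hs hx
            calc volume {x : ℝ | s < u m j.1 i.1 x} ≤ _ := measure_mono hsub2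
              _ = ENNReal.ofReal (off m j.1 + ell m j.1 / 2 * ((i.1:ℝ)/m)
                    + min (ell m j.1/2) s⁻¹ - (off m j.1 + ell m j.1 / 2 * ((i.1:ℝ)/m))) :=
                  Real.volume_Ioo
              _ = ENNReal.ofReal (min (ell m j.1/2) s⁻¹) := by ring_nf
        · next h =>
            push_neg at h
            have hempty : {x : ℝ | s < u m j.1 i.1 x} = ∅ := by
              apply Set.eq_empty_iff_forall_notMem.2
              intro x hx
              have h2 : (2:ℝ)^(m+1) ≤ s * ell m j.1 := by
                have := (div_le_iff₀ hs).1 h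
                linarith
              have h3 : (2:ℝ)^(m+1) / ell m j.1 ≤ s := by
                rw [div_le_iff₀ (ell_pos m j.1)]
                linarith
              have h4 : u m j.1 i.1 x ≤ s := (u_le_global m j.1 i.1 x).trans h3
              exact absurd hx (not_lt.2 h4)
            rw [hempty, measure_empty]
            simp
    _ = ENNReal.ofReal (∑ j : Fin (2^m),
          (if ell m j.1 < 2^(m+1)/s then min (ell m j.1 / 2) s⁻¹ else 0)) := by
        rw [ENNReal.ofReal_sum_of_nonneg]
        intro j _
        split
        · next => exact le_min (by linarith [ell_pos m j.1]) (by positivity)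
        · next => exact le_refl 0
    _ ≤ ENNReal.ofReal (2/s) := by
        apply ENNReal.ofReal_le_ofReal
        rw [Fin.sum_univ_eq_sum_range
          (fun j => if ell m j < 2^(m+1)/s then min (ell m j / 2) s⁻¹ else 0)]
        exact sum_b_le m hs _

lemma rearr_g_le (m : ℕ) (i : Fin m) {t : ℝ} (ht : t ∈ Ioo (0:ℝ) 1) :
    rearr (g m i) t ≤ 2/t := by
  apply le_of_forall_pos_le_add
  intro ε hε
  apply csInf_le
  · exact ⟨0, fun x hx => hx.1.le⟩
  · refine ⟨add_pos (div_pos two_pos ht.1) hε, ?_⟩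
    have hpos : (0:ℝ) < 2/t + ε := add_pos (div_pos two_pos ht.1) hε
    have h1 : distrib (g m i) (2/t+ε) ≤ ENNReal.ofReal (2/(2/t+ε)) :=
      distrib_g_le m i hpos
    have h2 : 2/(2/t+ε) ≤ t := by
      rw [div_le_iff₀ hpos]
      have h3 : t * (2/t) = 2 := by
        rw [mul_comm, div_mul_eq_mul_div, mul_div_assoc, div_self ht.1.ne', mul_one]
      nlinarith [ht.1, hε]
    exact h1.trans (ENNReal.ofReal_le_ofReal h2)

lemma wnorm_g_le (m : ℕ) (i : Fin m) : wnorm (g m i) ≤ ENNReal.ofReal 2 := by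
  unfold wnorm
  apply iSup₂_le
  intro t ht
  apply ENNReal.ofReal_le_ofReal
  have h1 := rearr_g_le m i ht
  have h2 : t * rearr (g m i) t ≤ t * (2/t) :=
    mul_le_mul_of_nonneg_left h1 ht.1.le
  have h3 : t * (2/t) = 2 := by
    rw [mul_comm, div_mul_eq_mul_div, mul_div_assoc, div_self ht.1.ne', mul_one]
  linarith


lemma harmonic_log (k : ℕ) :
    Real.log ((k:ℝ)+2) - Real.log 2 ≤ ∑ i ∈ Finset.range k, 1/((i:ℝ)+2) := by
  induction k with
  | zero => simp
  | succ k ih =>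
      rw [Finset.sum_range_succ]
      have h2 : Real.log (((k:ℝ)+3)/((k:ℝ)+2)) ≤ ((k:ℝ)+3)/((k:ℝ)+2) - 1 :=
        Real.log_le_sub_one_of_pos (by positivity)
      rw [Real.log_div (by positivity) (by positivity)] at h2
      have h3 : ((k:ℝ)+3)/((k:ℝ)+2) - 1 = 1/((k:ℝ)+2) := by field_simp; ring
      have h4 : (((k+1):ℕ):ℝ) + 2 = (k:ℝ)+3 := by push_cast; ring
      rw [h4]
      linarith

lemma coherent_low (m : ℕ) (hm : 1 ≤ m) {z : ℝ} (hz : 1/2 ≤ z) (hz1 : z < 1) :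
    (m:ℝ) * (Real.log ((m:ℝ)/2) - Real.log 2) ≤
      ∑ i ∈ Finset.range m, Sfun m (z - (i:ℝ)/m) := by
  have hm0 : (0:ℝ) < m := by exact_mod_cast hm
  set k := ⌊(m:ℝ)*z⌋₊ with hk
  have hk1 : (k:ℝ) ≤ (m:ℝ)*z := Nat.floor_le (by positivity)
  have hk2 : (m:ℝ)*z < (k:ℝ)+1 := Nat.lt_floor_add_one _
  have hkm : k < m := by
    have : (k:ℝ) < m := lt_of_le_of_lt hk1 (by nlinarith)
    exact_mod_cast this
  have hklow : (m:ℝ)/2 ≤ (k:ℝ)+1 := by nlinarith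
  clear_value k
  have hpt : ∀ i ∈ Finset.range k, (m:ℝ)/((k:ℝ)+1-(i:ℝ)) ≤ Sfun m (z - (i:ℝ)/m) := by
    intro i hi
    have hik : i < k := Finset.mem_range.1 hi
    have hikR : (i:ℝ) + 1 ≤ (k:ℝ) := by exact_mod_cast hik
    have hKpos : (0:ℝ) < (k:ℝ)+1-(i:ℝ) := by linarith
    have hmzi : (m:ℝ) * (z - (i:ℝ)/m) = (m:ℝ)*z - i := by field_simp
    have hzi0 : (0:ℝ) < z - (i:ℝ)/m := by
      have h5 : (1:ℝ) ≤ (m:ℝ)*z - i := by linarith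
      nlinarith [hmzi]
    have hzi_low : 1/(m:ℝ) ≤ z - (i:ℝ)/m := by
      rw [div_le_iff₀ hm0]
      nlinarith [hmzi]
    have hzi1 : z - (i:ℝ)/m < 1 := by
      have : (0:ℝ) ≤ (i:ℝ)/m := by positivity
      linarith
    have htr : ((2:ℝ))⁻¹^m ≤ z - (i:ℝ)/m := by
      refine le_trans ?_ hzi_low
      have hmp : (m:ℝ) ≤ 2^m := by exact_mod_cast (Nat.lt_two_pow_self (n := m)).le
      rw [inv_pow, ← one_div]
      exact one_div_le_one_div_of_le hm0 hmp
    have hS : Sfun m (z - (i:ℝ)/m) = (z - (i:ℝ)/m)⁻¹ := Sfun_eq m htr hzi1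
    rw [hS]
    rw [← one_div]
    rw [div_le_div_iff₀ hKpos hzi0]
    nlinarith [hmzi]
  have hsum1 : ∑ i ∈ Finset.range k, (m:ℝ)/((k:ℝ)+1-(i:ℝ))
      ≤ ∑ i ∈ Finset.range k, Sfun m (z - (i:ℝ)/m) := Finset.sum_le_sum hpt
  have hsum2 : ∑ i ∈ Finset.range k, Sfun m (z - (i:ℝ)/m)
      ≤ ∑ i ∈ Finset.range m, Sfun m (z - (i:ℝ)/m) := by
    apply Finset.sum_le_sum_of_subset_of_nonneg
    · exact Finset.range_subset_range.2 hkm.le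
    · intro i _ _; exact Sfun_nonneg m _
  have hrefl : ∑ i ∈ Finset.range k, (m:ℝ)/((k:ℝ)+1-(i:ℝ))
      = ∑ i ∈ Finset.range k, (m:ℝ)/((i:ℝ)+2) := by
    rw [← Finset.sum_range_reflect (fun i => (m:ℝ)/((i:ℝ)+2)) k]
    apply Finset.sum_congr rfl
    intro j hj
    have hjk : j < k := Finset.mem_range.1 hj
    congr 1
    have h1 : (↑(k - 1 - j) : ℝ) = (k:ℝ) - 1 - j := by
      have h2 : k - 1 - j = k - (1 + j) := by omega
      rw [h2, Nat.cast_sub (by omega)]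
      push_cast; ring
    rw [h1]; ring
  have hsum3 : (m:ℝ) * (Real.log ((k:ℝ)+2) - Real.log 2)
      ≤ ∑ i ∈ Finset.range k, (m:ℝ)/((i:ℝ)+2) := by
    have h6 := harmonic_log k
    have h7 : ∑ i ∈ Finset.range k, (m:ℝ)/((i:ℝ)+2)
        = (m:ℝ) * ∑ i ∈ Finset.range k, 1/((i:ℝ)+2) := by
      rw [Finset.mul_sum]
      apply Finset.sum_congr rfl
      intro i _; rw [mul_one_div]
    rw [h7]
    apply mul_le_mul_of_nonneg_left h6 hm0.le
  have hlog : Real.log ((m:ℝ)/2) ≤ Real.log ((k:ℝ)+2) := by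
    rw [Real.log_le_log_iff (by positivity) (by positivity)]
    linarith
  calc (m:ℝ) * (Real.log ((m:ℝ)/2) - Real.log 2)
      ≤ (m:ℝ) * (Real.log ((k:ℝ)+2) - Real.log 2) := by
        apply mul_le_mul_of_nonneg_left (by linarith) hm0.le
    _ ≤ ∑ i ∈ Finset.range k, (m:ℝ)/((i:ℝ)+2) := hsum3
    _ = ∑ i ∈ Finset.range k, (m:ℝ)/((k:ℝ)+1-(i:ℝ)) := hrefl.symm
    _ ≤ ∑ i ∈ Finset.range k, Sfun m (z - (i:ℝ)/m) := hsum1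
    _ ≤ _ := hsum2


lemma rademacher_values (k : ℕ) (t : ℝ) :
    rademacher k t = 1 ∨ rademacher k t = 0 ∨ rademacher k t = -1 := by
  unfold rademacher
  rcases lt_trichotomy (Real.sin (2 ^ k * Real.pi * t)) 0 with h|h|h
  · exact Or.inr (Or.inr (Real.sign_of_neg h))
  · exact Or.inr (Or.inl (by rw [h, Real.sign_zero]))
  · exact Or.inl (Real.sign_of_pos h)

noncomputable def pat (m : ℕ) (t : ℝ) : Fin m → Fin 2 :=
  fun i => if 0 < rademacher (i.1+1) t then 1 else 0

noncomputable def jstar (m : ℕ) (t : ℝ) : Fin (2^m) := finFunctionFinEquiv (pat m t)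

lemma r_mul_sg (m : ℕ) (t : ℝ) (i : Fin m) (hr : rademacher (i.1+1) t ≠ 0) :
    rademacher (i.1+1) t * sg m i (jstar m t) = 1 := by
  unfold sg jstar
  rw [Equiv.symm_apply_apply]
  rcases rademacher_values (i.1+1) t with h|h|h
  · rw [h]
    have hp : pat m t i = 1 := by unfold pat; rw [if_pos (by rw [h]; norm_num)]
    rw [if_pos hp]; norm_num
  · exact absurd h hr
  · rw [h]
    have hp : pat m t i = 0 := by unfold pat; rw [if_neg (by rw [h]; norm_num)]
    rw [if_neg (by rw [hp]; decide)]; norm_num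

lemma F_on_core (m : ℕ) (t : ℝ) (hr : ∀ i : Fin m, rademacher (i.1+1) t ≠ 0)
    {x : ℝ} (hx1 : off m (jstar m t).1 < x)
    (hx2 : x < off m (jstar m t).1 + ell m (jstar m t).1) :
    (∑ i : Fin m, rademacher (i.1+1) t * g m i x)
      = ∑ i : Fin m, u m (jstar m t).1 i.1 x := by
  apply Finset.sum_congr rfl
  intro i _
  have hg : g m i x = sg m i (jstar m t) * u m (jstar m t).1 i.1 x := by
    apply g_eq_single
    intro j hne
    by_contra hu
    have hsupp := u_support i.2 hu
    have heq : j.1 = (jstar m t).1 := by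
      rcases lt_trichotomy j.1 (jstar m t).1 with h|h|h
      · exact absurd (off_add_ell_le m h) (by push_neg; nlinarith [hsupp.2])
      · exact h
      · exact absurd (off_add_ell_le m h) (by push_neg; nlinarith [hsupp.1])
    exact hne (Fin.ext heq)
  rw [hg, ← mul_assoc, r_mul_sg m t i (hr i), one_mul]

lemma integrand_ge (m : ℕ) (hm1 : 1 ≤ m) {t : ℝ}
    (hr : ∀ i : Fin m, rademacher (i.1+1) t ≠ 0) :
    ENNReal.ofReal ((m:ℝ)/4 * (Real.log ((m:ℝ)/2) - Real.log 2)) ≤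
      wnorm (fun x => ∑ i : Fin m, rademacher (i.1+1) t * g m i x) := by
  set J := jstar m t with hJ
  set l := ell m J.1 with hl
  set o := off m J.1 with ho
  have hlp : 0 < l := ell_pos m J.1
  have honn : 0 ≤ o := off_nonneg m J.1
  have hhalf : o + l ≤ 1/2 := off_add_ell_le_half m J.1
  set F := fun x => ∑ i : Fin m, rademacher (i.1+1) t * g m i x with hF
  set B := (2/l) * ((m:ℝ) * (Real.log ((m:ℝ)/2) - Real.log 2)) with hB
  have hcore : ∀ x ∈ Ioo (o + l/4) (o + l/2), B ≤ F x := by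
    intro x hx
    have hx1 : o < x := by have := hx.1; simp only [mem_Ioo] at hx; linarith [hx.1]
    have hx2 : x < o + l := by simp only [mem_Ioo] at hx; linarith [hx.2]
    have he := F_on_core m t hr (by rw [← ho]; exact hx1) (by rw [← ho, ← hl]; exact hx2)
    have hz1 : 1/2 ≤ 2*(x-o)/l := by
      rw [le_div_iff₀ hlp]; simp only [mem_Ioo] at hx; nlinarith [hx.1]
    have hz2 : 2*(x-o)/l < 1 := by
      rw [div_lt_one hlp]; simp only [mem_Ioo] at hx; nlinarith [hx.2]
    have hcl := coherent_low m hm1 hz1 hz2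
    calc B ≤ (2/l) * ∑ i ∈ Finset.range m, Sfun m (2*(x-o)/l - (i:ℝ)/m) := by
          rw [hB]
          apply mul_le_mul_of_nonneg_left hcl (by positivity)
      _ = ∑ i ∈ Finset.range m, (2/l) * Sfun m (2*(x-o)/l - (i:ℝ)/m) := Finset.mul_sum _ _ _
      _ = ∑ i : Fin m, (2/l) * Sfun m (2*(x-o)/l - (i.1:ℝ)/m) :=
          (Fin.sum_univ_eq_sum_range (fun i => (2/l) * Sfun m (2*(x-o)/l - (i:ℝ)/m)) m).symm
      _ = ∑ i : Fin m, u m J.1 i.1 x := by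
          apply Finset.sum_congr rfl
          intro i _
          rw [u, ← hl, ← ho]
      _ = F x := he.symm
  have hd : ∀ s : ℝ, 0 < s → s < B → ENNReal.ofReal (l/4) ≤ distrib F s := by
    intro s hs hsB
    have hsub : Ioo (o + l/4) (o + l/2) ⊆ {x ∈ Ioo (0:ℝ) 1 | s < |F x|} := by
      intro x hx
      have hxx := hx
      simp only [mem_Ioo] at hxx
      refine ⟨⟨by linarith, by linarith⟩, ?_⟩
      have h1 := hcore x hx
      have h2 : F x ≤ |F x| := le_abs_self _
      linarith
    calc ENNReal.ofReal (l/4) = volume (Ioo (o+l/4) (o+l/2)) := by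
          rw [Real.volume_Ioo]; congr 1; ring
      _ ≤ distrib F s := measure_mono hsub
  have hrearr : B ≤ rearr F (l/8) := by
    apply le_csInf
    · set Mb := (m:ℝ) * ∑ j ∈ Finset.range (2^m), 2^(m+1)/ell m j + 1 with hMb
      have hsum0 : 0 ≤ ∑ j ∈ Finset.range (2^m), (2:ℝ)^(m+1)/ell m j :=
        Finset.sum_nonneg fun j _ => le_of_lt (div_pos (by positivity) (ell_pos m j))
      have hm0 : (0:ℝ) < m := by exact_mod_cast hm1
      have hMbpos : 0 < Mb := by rw [hMb]; nlinarith
      refine ⟨Mb, hMbpos, ?_⟩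
      have hFle : ∀ x : ℝ, |F x| ≤ Mb - 1 := by
        intro x
        rw [hF, hMb]
        calc |∑ i : Fin m, rademacher (i.1+1) t * g m i x|
            ≤ ∑ i : Fin m, |rademacher (i.1+1) t * g m i x| :=
              Finset.abs_sum_le_sum_abs _ _
          _ ≤ ∑ _i : Fin m, ∑ j ∈ Finset.range (2^m), (2:ℝ)^(m+1)/ell m j := by
              apply Finset.sum_le_sum
              intro i _
              rw [abs_mul]
              have hr1 : |rademacher (i.1+1) t| ≤ 1 := by
                rcases rademacher_values (i.1+1) t with h|h|h <;> rw [h] <;> norm_num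
              have hg1 : |g m i x| ≤ ∑ j ∈ Finset.range (2^m), (2:ℝ)^(m+1)/ell m j := by
                unfold g
                calc |∑ j : Fin (2^m), sg m i j * u m j.1 i.1 x|
                    ≤ ∑ j : Fin (2^m), |sg m i j * u m j.1 i.1 x| :=
                      Finset.abs_sum_le_sum_abs _ _
                  _ ≤ ∑ j : Fin (2^m), (2:ℝ)^(m+1)/ell m j.1 := by
                      apply Finset.sum_le_sum
                      intro j _
                      rw [abs_mul]
                      have hsg : |sg m i j| ≤ 1 := by
                        rcases sg_cases m i j with h|h <;> rw [h] <;> norm_num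
                      have huj : |u m j.1 i.1 x| ≤ (2:ℝ)^(m+1)/ell m j.1 := by
                        rw [abs_of_nonneg (u_nonneg m j.1 i.1 x)]
                        exact u_le_global m j.1 i.1 x
                      calc |sg m i j| * |u m j.1 i.1 x| ≤ 1 * ((2:ℝ)^(m+1)/ell m j.1) :=
                            mul_le_mul hsg huj (abs_nonneg _) (by norm_num)
                        _ = (2:ℝ)^(m+1)/ell m j.1 := one_mul _
                  _ = ∑ j ∈ Finset.range (2^m), (2:ℝ)^(m+1)/ell m j :=
                      Fin.sum_univ_eq_sum_range (fun j => (2:ℝ)^(m+1)/ell m j) (2^m)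
              calc |rademacher (i.1+1) t| * |g m i x|
                  ≤ 1 * (∑ j ∈ Finset.range (2^m), (2:ℝ)^(m+1)/ell m j) :=
                    mul_le_mul hr1 hg1 (abs_nonneg _) (by norm_num)
                _ = _ := one_mul _
          _ = (m:ℝ) * ∑ j ∈ Finset.range (2^m), (2:ℝ)^(m+1)/ell m j := by
              rw [Finset.sum_const, Finset.card_univ, Fintype.card_fin, nsmul_eq_mul]
          _ = (m:ℝ) * ∑ j ∈ Finset.range (2^m), (2:ℝ)^(m+1)/ell m j + 1 - 1 := by ring
      have hempty : {x ∈ Ioo (0:ℝ) 1 | Mb < |F x|} = ∅ := by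
        apply Set.eq_empty_iff_forall_notMem.2
        rintro x ⟨_, hx⟩
        have := hFle x
        linarith
      have : distrib F Mb = 0 := by
        unfold distrib; rw [hempty, measure_empty]
      rw [this]
      exact zero_le
    · intro s hsmem
      by_contra hlt
      push_neg at hlt
      have h1 := hd s hsmem.1 hlt
      have h2 : distrib F s ≤ ENNReal.ofReal (l/8) := hsmem.2
      have h3 : ENNReal.ofReal (l/4) ≤ ENNReal.ofReal (l/8) := h1.trans h2
      rw [ENNReal.ofReal_le_ofReal_iff (by positivity)] at h3
      linarith
  have hmem : l/8 ∈ Ioo (0:ℝ) 1 := ⟨by positivity, by nlinarith⟩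
  have hfin : ENNReal.ofReal ((l/8) * B) ≤ wnorm F := by
    calc ENNReal.ofReal ((l/8)*B) ≤ ENNReal.ofReal ((l/8) * rearr F (l/8)) := by
          apply ENNReal.ofReal_le_ofReal
          apply mul_le_mul_of_nonneg_left hrearr (by positivity)
      _ ≤ wnorm F := by
          unfold wnorm
          exact le_biSup (fun t' => ENNReal.ofReal (t' * rearr F t')) hmem
  have hval : (l/8) * B = (m:ℝ)/4 * (Real.log ((m:ℝ)/2) - Real.log 2) := by
    rw [hB]; field_simp; ring
  rw [hval] at hfin
  exact hfin


lemma null_bad (m : ℕ) : volume {t : ℝ | ∃ i : Fin m, rademacher (i.1+1) t = 0} = 0 := by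
  have hsub : {t : ℝ | ∃ i : Fin m, rademacher (i.1+1) t = 0} ⊆
      ⋃ i : Fin m, {t : ℝ | Real.sin (2^(i.1+1) * Real.pi * t) = 0} := by
    rintro t ⟨i, hi⟩
    apply Set.mem_iUnion.2 ⟨i, ?_⟩
    have : Real.sign (Real.sin (2^(i.1+1) * Real.pi * t)) = 0 := hi
    exact Real.sign_eq_zero_iff.1 this
  have hcnt : ∀ i : Fin m, Set.Countable {t : ℝ | Real.sin (2^(i.1+1) * Real.pi * t) = 0} := by
    intro i
    have hc : (0:ℝ) < 2^(i.1+1) * Real.pi := by positivity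
    have heq : {t : ℝ | Real.sin (2^(i.1+1) * Real.pi * t) = 0} ⊆
        Set.range (fun n : ℤ => (n:ℝ) * Real.pi / (2^(i.1+1) * Real.pi)) := by
      intro t ht
      obtain ⟨n, hn⟩ := Real.sin_eq_zero_iff.1 ht
      refine ⟨n, ?_⟩
      show ((n:ℝ) * Real.pi) / (2^(i.1+1) * Real.pi) = t
      rw [hn]; field_simp
    exact Set.Countable.mono heq (Set.countable_range _)
  have : Set.Countable (⋃ i : Fin m, {t : ℝ | Real.sin (2^(i.1+1) * Real.pi * t) = 0}) :=
    Set.countable_iUnion hcnt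
  exact measure_mono_null hsub (this.measure_zero volume)

end S9


open S9 in
/-- Weak-`L¹(0,1)` does not have type 1: for every `K > 0` there are finitely many
functions in the space whose Rademacher average of the quasi-norm exceeds
`K` times the sum of the quasi-norms. -/
theorem stmt9 : ∀ K > (0 : ℝ), ∃ (n : ℕ) (g : Fin n → ℝ → ℝ),
    (∀ k, Measurable (g k)) ∧ (∀ k, wnorm (g k) < ⊤) ∧
    ENNReal.ofReal K * ∑ k, wnorm (g k) <
      ∫⁻ t in Set.Ioo (0 : ℝ) 1,
        wnorm (fun x => ∑ k : Fin n, rademacher ((k : ℕ) + 1) t * g k x) := by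
  intro K hK
  set KK := 8*K + 2*Real.log 2 + 2 with hKK
  set m := ⌈Real.exp KK⌉₊ + 1 with hm
  have hm1 : 1 ≤ m := by omega
  have hmR : Real.exp KK ≤ (m:ℝ) := by
    calc Real.exp KK ≤ (⌈Real.exp KK⌉₊ : ℝ) := Nat.le_ceil _
      _ ≤ (m:ℝ) := by exact_mod_cast Nat.le_succ _
  have hlogm : KK ≤ Real.log m := by
    calc KK = Real.log (Real.exp KK) := (Real.log_exp KK).symm
      _ ≤ Real.log m := by
          rw [Real.log_le_log_iff (Real.exp_pos _) (by exact_mod_cast Nat.lt_of_lt_of_le Nat.zero_lt_one hm1)]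
          exact hmR
  refine ⟨m, fun i => S9.g m i, fun i => measurable_g m i, fun i => ?_, ?_⟩
  · exact lt_of_le_of_lt (wnorm_g_le m i) (by simp)
  · -- main inequality
    have hm0 : (0:ℝ) < m := by exact_mod_cast hm1
    set κ := (m:ℝ)/4 * (Real.log ((m:ℝ)/2) - Real.log 2) with hκ
    -- LHS ≤ ofReal (K * (2*m))
    have hLHS : ENNReal.ofReal K * ∑ i : Fin m, wnorm (S9.g m i) ≤ ENNReal.ofReal (K * (2*m)) := by
      have h1 : ∑ i : Fin m, wnorm (S9.g m i) ≤ ENNReal.ofReal (2*m) := by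
        calc ∑ i : Fin m, wnorm (S9.g m i) ≤ ∑ _i : Fin m, ENNReal.ofReal 2 :=
              Finset.sum_le_sum fun i _ => wnorm_g_le m i
          _ = (m : ENNReal) * ENNReal.ofReal 2 := by
              rw [Finset.sum_const, Finset.card_univ, Fintype.card_fin, nsmul_eq_mul]
          _ = ENNReal.ofReal (2*m) := by
              rw [← ENNReal.ofReal_natCast m, ← ENNReal.ofReal_mul (by positivity)]
              congr 1; ring
      calc ENNReal.ofReal K * ∑ i : Fin m, wnorm (S9.g m i)
          ≤ ENNReal.ofReal K * ENNReal.ofReal (2*m) := by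
            exact mul_le_mul_right h1 _
        _ = ENNReal.ofReal (K * (2*m)) := (ENNReal.ofReal_mul hK.le).symm
    -- RHS ≥ ofReal κ
    have hae : ∀ᵐ t ∂(volume.restrict (Set.Ioo (0:ℝ) 1)),
        ENNReal.ofReal κ ≤ wnorm (fun x => ∑ i : Fin m, rademacher ((i:ℕ)+1) t * S9.g m i x) := by
      have h0 : ∀ᵐ t ∂(volume : Measure ℝ), ¬ (∃ i : Fin m, rademacher (i.1+1) t = 0) :=
        (measure_eq_zero_iff_ae_notMem.1 (null_bad m))
      have h1 : ∀ᵐ t ∂(volume.restrict (Set.Ioo (0:ℝ) 1)),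
          ¬ (∃ i : Fin m, rademacher (i.1+1) t = 0) := ae_restrict_of_ae h0
      refine h1.mono fun t ht => ?_
      push_neg at ht
      exact integrand_ge m hm1 ht
    have hRHS : ENNReal.ofReal κ ≤
        ∫⁻ t in Set.Ioo (0:ℝ) 1,
          wnorm (fun x => ∑ i : Fin m, rademacher ((i:ℕ)+1) t * S9.g m i x) := by
      calc ENNReal.ofReal κ = ENNReal.ofReal κ * volume (Set.Ioo (0:ℝ) 1) := by
            rw [Real.volume_Ioo]
            norm_num
        _ = ∫⁻ _t in Set.Ioo (0:ℝ) 1, ENNReal.ofReal κ := (setLIntegral_const _ _).symm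
        _ ≤ _ := lintegral_mono_ae hae
    -- strict middle inequality
    have hmid : K * (2*m) < κ := by
      rw [hκ]
      have hlog2 : Real.log ((m:ℝ)/2) = Real.log m - Real.log 2 :=
        Real.log_div (by positivity) (by norm_num)
      rw [hlog2]
      have h2 : 8*K + 2*Real.log 2 + 2 ≤ Real.log m := hlogm
      nlinarith [hm0, hK]
    calc ENNReal.ofReal K * ∑ i : Fin m, wnorm (S9.g m i)
        ≤ ENNReal.ofReal (K * (2*m)) := hLHS
      _ < ENNReal.ofReal κ := by
          rw [ENNReal.ofReal_lt_ofReal_iff (by nlinarith [hm0, hK])]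
          exact hmid
      _ ≤ _ := hRHS
end

section
/- For $n \ge 2$, $k \ge 1$, and $1 \le i \le n-1$, the function $f_{ki}(t) = \frac{1}{t+\frac{1}{n^{k-1}}-\frac{i}{n^k}}\chi_{(\frac{1}{n^k},\frac{i}{n^k}]}(t) + \frac{1}{t-\frac{i-1}{n^k}}\chi_{(\frac{i}{n^k},\frac{1}{n^{k-1}}]}(t)$ on $(0,1)$ satisfies $\|f_{ki}\|_{1,\infty} \le 1$. -/
open MeasureTheory Set

theorem stmt15 (n k i : ℕ) (hn : 2 ≤ n) (hk : 1 ≤ k) (hi : 1 ≤ i) (hi' : i ≤ n - 1)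
    (f : ℝ → ℝ)
    (hf : ∀ t : ℝ,
      f t = (Set.Ioc (1 / (n : ℝ) ^ k) ((i : ℝ) / n ^ k)).indicator
          (fun s => 1 / (s + 1 / (n : ℝ) ^ (k - 1) - (i : ℝ) / n ^ k)) t
        + (Set.Ioc ((i : ℝ) / n ^ k) (1 / (n : ℝ) ^ (k - 1))).indicator
          (fun s => 1 / (s - ((i : ℝ) - 1) / n ^ k)) t) :
    wnorm f ≤ 1 := by
  have hk' : k - 1 + 1 = k := Nat.succ_pred_eq_of_pos hk
  have hn1 : i + 1 ≤ n := by omega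
  set N : ℝ := (n : ℝ) with hNdef
  have hN2 : (2:ℝ) ≤ N := by rw [hNdef]; exact_mod_cast hn
  have hNpos : (0:ℝ) < N := by linarith
  have hNk : (0:ℝ) < N ^ k := pow_pos hNpos k
  set a : ℝ := 1 / N ^ k with hadef
  set b : ℝ := (i : ℝ) / N ^ k with hbdef
  set c : ℝ := 1 / N ^ (k-1) with hcdef
  have hpow : N ^ k = N ^ (k-1) * N := by
    conv_lhs => rw [← hk']
    rw [pow_succ]
  have ha : 0 < a := by positivity
  have hab : a ≤ b := by
    have h1 : (1:ℝ) ≤ (i:ℝ) := by exact_mod_cast hi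
    rw [hadef, hbdef]
    gcongr
  have hc' : c = N / N ^ k := by
    rw [hcdef, hpow]
    field_simp
  have hbc : b + a ≤ c := by
    have hi1 : (i:ℝ) + 1 ≤ N := by rw [hNdef]; exact_mod_cast hn1
    rw [hc', hbdef, hadef, ← add_div]
    gcongr
  have hba : ((i:ℝ) - 1) / N ^ k = b - a := by
    rw [hbdef, hadef]; ring
  rw [wnorm]
  apply iSup₂_le
  intro t ht
  obtain ⟨ht0, ht1⟩ := ht
  have hs : (0:ℝ) < 1/t := by positivity
  set m1 : ℝ := min b (t - c + b) with hm1
  set m2 : ℝ := min c (t + b - a) with hm2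
  have hdist : distrib f (1/t) ≤ ENNReal.ofReal t := by
    have hsub : {x ∈ Set.Ioo (0:ℝ) 1 | 1/t < |f x|} ⊆
        Set.Ioc a m1 ∪ Set.Ioc b m2 := by
      rintro x ⟨hx01, hfx⟩
      rw [hf x] at hfx
      by_cases h1 : x ∈ Set.Ioc a b
      · left
        have h2 : x ∉ Set.Ioc b c := fun h => absurd h.1 (not_lt.mpr h1.2)
        rw [Set.indicator_of_mem h1, Set.indicator_of_notMem h2, add_zero] at hfx
        have hd : 0 < x + c - b := by
          have := h1.1
          nlinarith [ha, hab, hbc]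
        rw [abs_of_pos (by positivity)] at hfx
        have hlt : x + c - b < t := by
          calc x + c - b = 1 / (1 / (x + c - b)) := by rw [one_div_one_div]
            _ < 1 / (1/t) := one_div_lt_one_div_of_lt hs hfx
            _ = t := by rw [one_div_one_div]
        exact ⟨h1.1, le_min h1.2 (by linarith)⟩
      · by_cases h2 : x ∈ Set.Ioc b c
        · right
          rw [Set.indicator_of_notMem h1, Set.indicator_of_mem h2, zero_add, hba] at hfx
          have hd : 0 < x - (b - a) := by
            have := h2.1
            linarith
          rw [abs_of_pos (by positivity)] at hfx
          have hlt : x - (b - a) < t := by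
            calc x - (b - a) = 1 / (1 / (x - (b - a))) := by rw [one_div_one_div]
              _ < 1 / (1/t) := one_div_lt_one_div_of_lt hs hfx
              _ = t := by rw [one_div_one_div]
          exact ⟨h2.1, le_min h2.2 (by linarith)⟩
        · rw [Set.indicator_of_notMem h1, Set.indicator_of_notMem h2, add_zero] at hfx
          simp at hfx
          linarith
    have hkey : max (m1 - a) 0 + max (m2 - b) 0 ≤ t := by
      rw [hm1, hm2]
      simp only [min_def, max_def]
      split_ifs <;> linarith
    calc distrib f (1/t) ≤ volume (Set.Ioc a m1 ∪ Set.Ioc b m2) := measure_mono hsub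
      _ ≤ volume (Set.Ioc a m1) + volume (Set.Ioc b m2) := measure_union_le _ _
      _ = ENNReal.ofReal (m1 - a) + ENNReal.ofReal (m2 - b) := by
          rw [Real.volume_Ioc, Real.volume_Ioc]
      _ ≤ ENNReal.ofReal (max (m1 - a) 0) + ENNReal.ofReal (max (m2 - b) 0) := by
          gcongr <;> exact le_max_left _ _
      _ = ENNReal.ofReal (max (m1 - a) 0 + max (m2 - b) 0) := by
          rw [ENNReal.ofReal_add (le_max_right _ _) (le_max_right _ _)]
      _ ≤ ENNReal.ofReal t := ENNReal.ofReal_le_ofReal hkey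
  have hrearr : rearr f t ≤ 1/t := by
    apply csInf_le
    · exact ⟨0, fun s hs => le_of_lt hs.1⟩
    · exact ⟨hs, hdist⟩
  have h1 : t * rearr f t ≤ 1 := by
    calc t * rearr f t ≤ t * (1/t) := by
          apply mul_le_mul_of_nonneg_left hrearr ht0.le
      _ = 1 := by field_simp
  calc ENNReal.ofReal (t * rearr f t) ≤ ENNReal.ofReal 1 := ENNReal.ofReal_le_ofReal h1
    _ = 1 := ENNReal.ofReal_one
end

section
/- For every sufficiently large $n \in \mathbb{N}$ there exist sequences $x_1, \dots, x_{n-1} \in \ell_{1,\infty}$ with $\|x_j\|_{1,\infty} \le 1$ such that for every choice of signs $\eta_j = \pm 1$, $\|\sum_{j=1}^{n-1} \eta_j x_j\|_{1,\infty} \ge \frac{1}{2} n \log n$. -/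
open Set

/-- The decreasing rearrangement of a sequence, `1`-indexed:
`srearr x n = x*(n) = inf {s > 0 : #{k : |x k| > s} ≤ n - 1}` for `n ≥ 1`. -/
noncomputable def srearr (x : ℕ → ℝ) (n : ℕ) : ℝ :=
  sInf {s : ℝ | 0 < s ∧ {k : ℕ | s < |x k|}.encard ≤ (n - 1 : ℕ)}

/-- The weak-`ℓ¹` quasi-norm `‖x‖_{1,∞} = sup_{n ≥ 1} n x*(n)`. -/
noncomputable def swnorm (x : ℕ → ℝ) : ENNReal :=
  ⨆ n : ℕ, ENNReal.ofReal (((n : ℝ) + 1) * srearr x (n + 1))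

namespace Stmt16Aux

/-- Index type for the support points: (pattern, sub-scale b, block index r, copy c). -/
abbrev Q (m : ℕ) : Type := (Fin m → Bool) × ℕ × ℕ × ℕ

/-- Injective code of a sign pattern. -/
noncomputable def tc {m : ℕ} (ε : Fin m → Bool) : ℕ := Encodable.encode ε

lemma tc_inj {m : ℕ} : Function.Injective (tc (m := m)) := Encodable.encode_injective

/-- real sign associated to a boolean. -/
def sg (b : Bool) : ℝ := if b then 1 else -1

lemma abs_sg (b : Bool) : |sg b| = 1 := by cases b <;> simp [sg]

/-- global scale of a point. -/
noncomputable def scl (B : ℕ) {m : ℕ} (q : Q m) : ℕ := B * tc q.1 + q.2.1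

/-- validity of a point for row `j`. -/
def ok (B : ℕ) {m : ℕ} (j : ℕ) (q : Q m) : Prop :=
  q.2.1 < B ∧ q.2.2.1 = j / 2 ^ q.2.1 ∧ (q.2.2.1 + 1) * 2 ^ q.2.1 ≤ m ∧
    q.2.2.2 < 2 ^ scl B q

open scoped Classical in
/-- the value of row `j` at point `q`. -/
noncomputable def val (B : ℕ) {m : ℕ} (j : Fin m) (q : Q m) : ℝ :=
  if ok B (j : ℕ) q then sg (q.1 j) * ((2 : ℝ) ^ (scl B q + 1))⁻¹ else 0

lemma abs_val_of_ok {B m : ℕ} {j : Fin m} {q : Q m} (h : ok B (j : ℕ) q) :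
    |val B j q| = ((2 : ℝ) ^ (scl B q + 1))⁻¹ := by
  rw [val, if_pos h, abs_mul, abs_sg, one_mul, abs_of_pos (by positivity)]

lemma val_of_not_ok {B m : ℕ} {j : Fin m} {q : Q m} (h : ¬ ok B (j : ℕ) q) :
    val B j q = 0 := by rw [val, if_neg h]

/-- the rows, as sequences on ℕ. -/
noncomputable def xx (B : ℕ) {m : ℕ} (j : Fin m) : ℕ → ℝ :=
  Function.extend Encodable.encode (val B j) (fun _ => 0)

lemma xx_encode {B m : ℕ} (j : Fin m) (q : Q m) :
    xx B j (Encodable.encode q) = val B j q :=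
  Encodable.encode_injective.extend_apply _ _ _

/-- Level sets of an extended function. -/
lemma levelset {m : ℕ} (F : Q m → ℝ) {s : ℝ} (hs : 0 < s) :
    {i : ℕ | s < |Function.extend (Encodable.encode (α := Q m)) F (fun _ => 0) i|}
      = Encodable.encode '' {q : Q m | s < |F q|} := by
  ext i
  by_cases h : ∃ q : Q m, Encodable.encode q = i
  · obtain ⟨q, rfl⟩ := h
    simp only [Set.mem_setOf_eq, Encodable.encode_injective.extend_apply]
    constructor
    · intro hq; exact ⟨q, hq, rfl⟩
    · rintro ⟨q', hq', he⟩
      rw [Encodable.encode_injective he] at hq'; exact hq'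
  · rw [Set.mem_setOf_eq, Function.extend_apply' _ _ _ h]
    simp only [abs_zero]
    constructor
    · intro hh; exact absurd hh (not_lt.2 hs.le)
    · rintro ⟨q', _, he⟩; exact absurd ⟨q', he⟩ h

lemma srearr_le {x : ℕ → ℝ} {k : ℕ} {s : ℝ} (hs : 0 < s)
    (h : {i : ℕ | s < |x i|}.encard ≤ ((k - 1 : ℕ) : ℕ∞)) : srearr x k ≤ s :=
  csInf_le ⟨0, fun t ht => ht.1.le⟩ ⟨hs, h⟩

lemma le_srearr {x : ℕ → ℝ} {k : ℕ} {lam : ℝ}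
    (hne : ∃ s : ℝ, 0 < s ∧ {i : ℕ | s < |x i|}.encard ≤ ((k - 1 : ℕ) : ℕ∞))
    (h : ∀ s : ℝ, 0 < s → {i : ℕ | s < |x i|}.encard ≤ ((k - 1 : ℕ) : ℕ∞) → lam ≤ s) :
    lam ≤ srearr x k := by
  refine le_csInf ?_ (fun t ht => h t ht.1 ht.2)
  obtain ⟨s, h1, h2⟩ := hne; exact ⟨s, h1, h2⟩

/-- counting bound for a single row at threshold `(2^(σ+1))⁻¹`. -/
lemma row_count {m B : ℕ} (hB : 0 < B) (j : Fin m) (σ : ℕ) :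
    {q : Q m | ((2:ℝ) ^ (σ+1))⁻¹ < |val B j q|}.encard ≤ ((2 ^ σ - 1 : ℕ) : ℕ∞) := by
  classical
  set E := {q : Q m | ((2:ℝ) ^ (σ+1))⁻¹ < |val B j q|} with hE
  have hmem : ∀ q ∈ E, ok B (j:ℕ) q ∧ scl B q < σ := by
    intro q hq
    by_cases h : ok B (j:ℕ) q
    · refine ⟨h, ?_⟩
      have habs := abs_val_of_ok h
      rw [hE, Set.mem_setOf_eq, habs] at hq
      have h2 : (2:ℝ) ^ (scl B q + 1) < 2 ^ (σ + 1) := by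
        have := (inv_lt_inv₀ (by positivity) (by positivity)).mp hq
        exact this
      have := (pow_lt_pow_iff_right₀ (by norm_num : (1:ℝ) < 2)).mp h2
      omega
    · exfalso
      rw [hE, Set.mem_setOf_eq, val_of_not_ok h, abs_zero] at hq
      exact absurd hq (not_lt.2 (by positivity))
  set ψ : Q m → ℕ := fun q => 2 ^ scl B q + q.2.2.2 with hψdef
  have hψbound : ∀ q ∈ E, 2 ^ scl B q ≤ ψ q ∧ ψ q < 2 ^ (scl B q + 1) := by
    intro q hq
    obtain ⟨⟨_, _, _, hc⟩, _⟩ := hmem q hq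
    have hpsi : ψ q = 2 ^ scl B q + q.2.2.2 := rfl
    have hps : 2 ^ (scl B q + 1) = 2 ^ scl B q + 2 ^ scl B q := by
      rw [pow_succ]; ring
    omega
  have hinj : Set.InjOn ψ E := by
    rintro q hq q' hq' hψeq
    obtain ⟨⟨hb, hr, hrm, hc⟩, hs⟩ := hmem q hq
    obtain ⟨⟨hb', hr', hrm', hc'⟩, hs'⟩ := hmem q' hq'
    obtain ⟨hl1, hl2⟩ := hψbound q hq
    obtain ⟨hl1', hl2'⟩ := hψbound q' hq'
    have hlog : Nat.log 2 (ψ q) = scl B q := Nat.log_eq_of_pow_le_of_lt_pow hl1 hl2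
    have hlog' : Nat.log 2 (ψ q') = scl B q' := Nat.log_eq_of_pow_le_of_lt_pow hl1' hl2'
    have hscl : scl B q = scl B q' := by rw [← hlog, ← hlog', hψeq]
    have hcq : q.2.2.2 = q'.2.2.2 := by
      have heq2 : 2 ^ scl B q + q.2.2.2 = 2 ^ scl B q' + q'.2.2.2 := hψeq
      rw [hscl] at heq2
      omega
    have hbb : q.2.1 = q'.2.1 := by
      have e1 : (B * tc q.1 + q.2.1) % B = q.2.1 := by
        rw [Nat.mul_add_mod]; exact Nat.mod_eq_of_lt hb
      have e2 : (B * tc q'.1 + q'.2.1) % B = q'.2.1 := by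
        rw [Nat.mul_add_mod]; exact Nat.mod_eq_of_lt hb'
      have : (B * tc q.1 + q.2.1) = (B * tc q'.1 + q'.2.1) := hscl
      rw [← e1, ← e2, this]
    have htc : tc q.1 = tc q'.1 := by
      have : B * tc q.1 + q.2.1 = B * tc q'.1 + q'.2.1 := hscl
      rw [hbb] at this
      have h3 : B * tc q.1 = B * tc q'.1 := by omega
      exact Nat.eq_of_mul_eq_mul_left hB h3
    have hee : q.1 = q'.1 := tc_inj htc
    have hrr : q.2.2.1 = q'.2.2.1 := by rw [hr, hr', hbb]
    obtain ⟨ε, b, r, c⟩ := q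
    obtain ⟨ε', b', r', c'⟩ := q'
    simp_all
  have himg : ψ '' E ⊆ (↑(Finset.Ico 1 (2 ^ σ)) : Set ℕ) := by
    rintro _ ⟨q, hq, rfl⟩
    obtain ⟨_, hsσ⟩ := hmem q hq
    obtain ⟨hl1, hl2⟩ := hψbound q hq
    simp only [Finset.coe_Ico, Set.mem_Ico]
    have hpsi : ψ q = 2 ^ scl B q + q.2.2.2 := rfl
    constructor
    · have h1 : 1 ≤ 2 ^ scl B q := Nat.one_le_two_pow
      omega
    · have h1 : 2 ^ (scl B q + 1) ≤ 2 ^ σ := Nat.pow_le_pow_right (by norm_num) (by omega)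
      omega
  calc E.encard = (ψ '' E).encard := (Set.InjOn.encard_image hinj).symm
    _ ≤ (↑(Finset.Ico 1 (2 ^ σ)) : Set ℕ).encard := Set.encard_le_encard himg
    _ = ((Finset.Ico 1 (2 ^ σ)).card : ℕ∞) := Set.encard_coe_eq_coe_finsetCard _
    _ = ((2 ^ σ - 1 : ℕ) : ℕ∞) := by rw [Nat.card_Ico]

/-- each row has weak norm at most one. -/
lemma row_norm {m B : ℕ} (hB : 0 < B) (j : Fin m) : swnorm (xx B j) ≤ 1 := by
  rw [swnorm]
  refine iSup_le fun k => ?_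
  rw [ENNReal.ofReal_le_one]
  set σ := Nat.log 2 (k+1) with hσ
  have hs0 : (0:ℝ) < ((2:ℝ) ^ (σ+1))⁻¹ := by positivity
  have hcount : {i : ℕ | ((2:ℝ) ^ (σ+1))⁻¹ < |xx B j i|}.encard ≤ ((k + 1 - 1 : ℕ) : ℕ∞) := by
    rw [xx, levelset (val B j) hs0]
    rw [Set.InjOn.encard_image (Encodable.encode_injective.injOn)]
    refine le_trans (row_count hB j σ) ?_
    have h1 : 2 ^ σ ≤ k + 1 := Nat.pow_log_le_self 2 (Nat.succ_ne_zero k)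
    rw [Nat.cast_le]
    omega
  have hle : srearr (xx B j) (k+1) ≤ ((2:ℝ) ^ (σ+1))⁻¹ := srearr_le hs0 hcount
  have hk : (k:ℝ) + 1 ≤ (2:ℝ) ^ (σ+1) := by
    have := Nat.lt_pow_succ_log_self (by norm_num : 1 < 2) (k+1)
    have : (k:ℝ) + 1 < (2:ℝ) ^ (σ+1) := by exact_mod_cast this
    linarith
  calc ((k:ℝ) + 1) * srearr (xx B j) (k+1) ≤ ((k:ℝ) + 1) * ((2:ℝ) ^ (σ+1))⁻¹ := by
        apply mul_le_mul_of_nonneg_left hle (by positivity)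
    _ ≤ (2:ℝ) ^ (σ+1) * ((2:ℝ) ^ (σ+1))⁻¹ := by
        apply mul_le_mul_of_nonneg_right hk (by positivity)
    _ = 1 := by field_simp

/-- cardinality of a block. -/
lemma card_block {m b r : ℕ} (hrm : (r+1) * 2^b ≤ m) :
    (Finset.univ.filter (fun j : Fin m => (j:ℕ)/2^b = r)).card = 2^b := by
  classical
  have h2 : 0 < 2^b := Nat.pow_pos (by norm_num)
  have hmk : ∀ t : ℕ, t ∈ Finset.range (2^b) → r * 2^b + t < m := by
    intro t ht
    have ht' : t < 2^b := Finset.mem_range.mp ht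
    calc r * 2^b + t < r * 2^b + 2^b := by omega
      _ = (r+1) * 2^b := by ring
      _ ≤ m := hrm
  conv_rhs => rw [← Finset.card_range (2^b)]
  refine Finset.card_bij' (fun j _ => (j:ℕ) - r * 2^b)
    (fun t ht => (⟨r * 2^b + t, hmk t ht⟩ : Fin m)) ?_ ?_ ?_ ?_
  · intro j hj
    rw [Finset.mem_filter] at hj
    have hd := hj.2
    have hlow : r * 2^b ≤ (j:ℕ) := by
      rw [← hd]; exact Nat.div_mul_le_self _ _
    have hmod : (j:ℕ) % 2^b < 2^b := Nat.mod_lt _ h2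
    have hdm : r * 2^b + (j:ℕ) % 2^b = (j:ℕ) := by
      rw [← hd, mul_comm]; exact Nat.div_add_mod _ _
    show (j:ℕ) - r * 2^b ∈ Finset.range (2^b)
    rw [Finset.mem_range]
    omega
  · intro t ht
    rw [Finset.mem_filter]
    refine ⟨Finset.mem_univ _, ?_⟩
    have ht' : t < 2^b := Finset.mem_range.mp ht
    show (r * 2^b + t) / 2^b = r
    rw [mul_comm r, Nat.mul_add_div h2, Nat.div_eq_of_lt ht', add_zero]
  · intro j hj
    rw [Finset.mem_filter] at hj
    have hd := hj.2
    have hlow : r * 2^b ≤ (j:ℕ) := by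
      rw [← hd]; exact Nat.div_mul_le_self _ _
    apply Fin.ext
    show r * 2^b + ((j:ℕ) - r * 2^b) = (j:ℕ)
    omega
  · intro t ht; simp

/-- the value of a signed sum at a gadget point of its own pattern. -/
lemma y_val {m B : ℕ} (η : Fin m → ℝ)
    (ε : Fin m → Bool) (hsg : ∀ j, η j * sg (ε j) = 1)
    {b r c : ℕ} (hb : b < B) (hrm : (r+1) * 2^b ≤ m) (hc : c < 2 ^ (B * tc ε + b)) :
    ∑ j, η j * val B j ((ε, b, r, c) : Q m) = ((2:ℝ) ^ (B * tc ε + 1))⁻¹ := by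
  classical
  have hval : ∀ j : Fin m, η j * val B j ((ε, b, r, c) : Q m) =
      if (j:ℕ) / 2^b = r then ((2:ℝ) ^ (B * tc ε + b + 1))⁻¹ else 0 := by
    intro j
    by_cases h : r = (j:ℕ)/2^b
    · rw [val, if_pos ⟨hb, h, hrm, hc⟩, if_pos h.symm, ← mul_assoc, hsg j, one_mul]
      rfl
    · rw [val, if_neg (fun hh => h hh.2.1), if_neg (fun hh => h hh.symm), mul_zero]
  rw [Finset.sum_congr rfl (fun j _ => hval j), Finset.sum_ite, Finset.sum_const,
    Finset.sum_const_zero, add_zero, card_block hrm, nsmul_eq_mul]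
  have : ((2:ℝ) ^ (B * tc ε + b + 1)) = (2:ℝ) ^ (B * tc ε + 1) * (2:ℝ) ^ b := by
    rw [← pow_add]; ring_nf
  rw [this, mul_inv]
  push_cast
  field_simp

end Stmt16Aux

open Stmt16Aux in
theorem stmt16 : ∃ N : ℕ, ∀ n : ℕ, N ≤ n →
    ∃ x : Fin (n - 1) → ℕ → ℝ,
      (∀ j, swnorm (x j) ≤ 1) ∧
      ∀ η : Fin (n - 1) → ℝ, (∀ j, η j = 1 ∨ η j = -1) →
        ENNReal.ofReal ((n : ℝ) * Real.log n / 2) ≤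
          swnorm (fun i => ∑ j, η j * x j i) := by
  classical
  use 65
  intro n hn
  set m := n - 1 with hm
  have hm64 : 64 ≤ m := by omega
  set B := Nat.log 2 m with hB
  have hB6 : 6 ≤ B := by
    have h1 : Nat.log 2 64 ≤ Nat.log 2 m := Nat.log_mono_right hm64
    have h2 : Nat.log 2 64 = 6 :=
      Nat.log_eq_of_pow_le_of_lt_pow (by norm_num) (by norm_num)
    rw [hB]
    omega
  have hB0 : 0 < B := by omega
  refine ⟨fun j => xx B j, fun j => row_norm hB0 j, ?_⟩
  intro η hη
  -- the aligned pattern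
  set ε : Fin m → Bool := fun j => if η j = 1 then true else false with hε
  have hsg : ∀ j, η j * sg (ε j) = 1 := by
    intro j
    rcases hη j with h | h
    · simp [hε, sg, h]
    · have hne : ¬ (η j = 1) := by rw [h]; norm_num
      simp [hε, sg, h, hne]
  set T := tc ε with hT
  set lam : ℝ := ((2:ℝ) ^ (B * T + 1))⁻¹ with hlam
  have hlam0 : 0 < lam := by positivity
  set y : ℕ → ℝ := fun i => ∑ j, η j * xx B j i with hy
  -- y as an extension
  have hyext : y = Function.extend (Encodable.encode (α := Q m))
      (fun q => ∑ j, η j * val B j q) (fun _ => 0) := by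
    funext i
    by_cases h : ∃ q : Q m, Encodable.encode q = i
    · obtain ⟨q, rfl⟩ := h
      rw [hy, Function.Injective.extend_apply Encodable.encode_injective]
      simp only [xx, Function.Injective.extend_apply Encodable.encode_injective]
    · have h0 : Function.extend (Encodable.encode (α := Q m))
          (fun q => ∑ j, η j * val B j q) (fun _ => 0) i = 0 :=
        Function.extend_apply' _ _ _ h
      rw [hy, h0]
      show (∑ j, η j * xx B j i) = 0
      apply Finset.sum_eq_zero
      intro j _
      have h1 : xx B j i = 0 := Function.extend_apply' _ _ _ h
      rw [h1, mul_zero]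
  -- the count
  set d : ℕ := ∑ b ∈ Finset.range B, (m / 2^b) * 2 ^ (B * T + b) with hd
  have hd1 : 1 ≤ d := by
    have h0 : 0 ∈ Finset.range B := Finset.mem_range.mpr hB0
    have h1 : (m / 2^0) * 2 ^ (B * T + 0) ≤ d := by
      rw [hd]
      exact Finset.single_le_sum (f := fun b => (m / 2^b) * 2 ^ (B * T + b))
        (fun _ _ => Nat.zero_le _) h0
    have h2 : 0 < (m / 2^0) * 2 ^ (B * T + 0) :=
      Nat.mul_pos (by simpa using (show 0 < m by omega)) (Nat.pow_pos (by norm_num))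
    omega
  -- lower bound on the level set count
  have hbig : ∀ s : ℝ, 0 < s → s < lam →
      ((d : ℕ∞)) ≤ {i : ℕ | s < |y i|}.encard := by
    intro s hs hslam
    -- explicit finset of gadget points
    set F : Finset (ℕ × ℕ × ℕ) := (Finset.range B).biUnion
      (fun b => (Finset.range (m / 2^b) ×ˢ Finset.range (2 ^ (B * T + b))).image
        (fun rc => (b, rc.1, rc.2))) with hF
    have hFcard : F.card = d := by
      rw [hF, Finset.card_biUnion]
      · rw [hd]
        apply Finset.sum_congr rfl
        intro b _
        rw [Finset.card_image_of_injective _ (by intro a b h; simpa [Prod.ext_iff] using h),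
          Finset.card_product, Finset.card_range, Finset.card_range]
      · intro a _ b _ hab
        simp only [Finset.disjoint_left]
        rintro p hp hp'
        simp only [Finset.mem_image] at hp hp'
        obtain ⟨rc, _, heq⟩ := hp
        obtain ⟨rc', _, heq'⟩ := hp'
        apply hab
        have h1 : p.1 = a := by rw [← heq]
        have h2 : p.1 = b := by rw [← heq']
        rw [← h1, h2]
    set Φ : ℕ × ℕ × ℕ → ℕ := fun p => Encodable.encode ((ε, p.1, p.2.1, p.2.2) : Q m) with hΦ
    have hmemF : ∀ p ∈ F, p.1 < B ∧ (p.2.1 + 1) * 2 ^ p.1 ≤ m ∧ p.2.2 < 2 ^ (B * T + p.1) := by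
      rintro ⟨b, r, c⟩ hp
      simp only [hF, Finset.mem_biUnion, Finset.mem_image] at hp
      obtain ⟨b', hb', rc, hrc, heq⟩ := hp
      rw [Finset.mem_product, Finset.mem_range, Finset.mem_range] at hrc
      obtain ⟨hr, hc⟩ := hrc
      rw [Finset.mem_range] at hb'
      have hb1 : b' = b := congrArg Prod.fst heq
      have hr1 : rc.1 = r := congrArg (fun z : ℕ × ℕ × ℕ => z.2.1) heq
      have hc1 : rc.2 = c := congrArg (fun z : ℕ × ℕ × ℕ => z.2.2) heq
      refine ⟨by rw [← hb1]; exact hb', ?_, ?_⟩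
      · show (r + 1) * 2 ^ b ≤ m
        rw [← hb1, ← hr1]
        have h2 : 0 < 2 ^ b' := Nat.pow_pos (by norm_num)
        exact (Nat.le_div_iff_mul_le h2).mp hr
      · show c < 2 ^ (B * T + b)
        rw [← hb1, ← hc1]
        exact hc
    have hΦval : ∀ p ∈ F, y (Φ p) = lam := by
      rintro ⟨b, r, c⟩ hp
      obtain ⟨hb, hrm, hc⟩ := hmemF _ hp
      rw [hyext, hΦ]
      rw [Function.Injective.extend_apply Encodable.encode_injective]
      exact y_val η ε hsg hb hrm hc
    have hΦinj : Set.InjOn Φ ↑F := by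
      rintro ⟨b, r, c⟩ _ ⟨b', r', c'⟩ _ h
      have := Encodable.encode_injective h
      simpa [Prod.ext_iff] using this
    have hsub : Φ '' ↑F ⊆ {i : ℕ | s < |y i|} := by
      rintro _ ⟨p, hp, rfl⟩
      rw [Set.mem_setOf_eq, hΦval p hp]
      rw [abs_of_pos hlam0]
      exact hslam
    calc (d : ℕ∞) = (F.card : ℕ∞) := by rw [hFcard]
      _ = (↑F : Set (ℕ × ℕ × ℕ)).encard := (Set.encard_coe_eq_coe_finsetCard _).symm
      _ = (Φ '' ↑F).encard := (Set.InjOn.encard_image hΦinj).symm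
      _ ≤ _ := Set.encard_le_encard hsub
  -- bounded above: the level sets are eventually empty
  have hybdd : ∀ i, |y i| ≤ (m : ℝ) := by
    intro i
    rw [hy]
    calc |∑ j, η j * xx B j i| ≤ ∑ j, |η j * xx B j i| := Finset.abs_sum_le_sum_abs _ _
      _ ≤ ∑ _j : Fin m, (1:ℝ) := by
          apply Finset.sum_le_sum
          intro j _
          rw [abs_mul]
          have h1 : |η j| = 1 := by rcases hη j with h | h <;> simp [h]
          rw [h1, one_mul]
          -- |xx B j i| ≤ 1
          by_cases h : ∃ q : Q m, Encodable.encode q = i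
          · obtain ⟨q, rfl⟩ := h
            rw [xx_encode]
            by_cases hok : ok B (j:ℕ) q
            · rw [abs_val_of_ok hok]
              have h1 : (1:ℝ) ≤ (2:ℝ) ^ (scl B q + 1) := by
                calc (1:ℝ) = 1 ^ (scl B q + 1) := (one_pow _).symm
                  _ ≤ 2 ^ (scl B q + 1) := by
                      apply pow_le_pow_left₀ <;> norm_num
              exact inv_le_one_of_one_le₀ h1
            · rw [val_of_not_ok hok]; simp
          · rw [xx, Function.extend_apply' _ _ _ h]; simp
      _ = (m : ℝ) := by simp
  -- nonemptiness of the srearr defining set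
  have hne : ∃ s : ℝ, 0 < s ∧ {i : ℕ | s < |y i|}.encard ≤ ((d - 1 : ℕ) : ℕ∞) := by
    refine ⟨(m:ℝ) + 1, by positivity, ?_⟩
    have hempty : {i : ℕ | (m:ℝ) + 1 < |y i|} = ∅ := by
      ext i
      simp only [Set.mem_setOf_eq, Set.mem_empty_iff_false, iff_false, not_lt]
      linarith [hybdd i]
    rw [hempty, Set.encard_empty]
    exact zero_le
  have hsre : lam ≤ srearr y d := by
    apply le_srearr hne
    intro s hs hcount
    by_contra hlt
    push_neg at hlt
    have h1 := hbig s hs hlt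
    have h2 : (d : ℕ∞) ≤ ((d - 1 : ℕ) : ℕ∞) := le_trans h1 hcount
    rw [Nat.cast_le] at h2
    omega
  -- the capacity estimate
  have hnm : (n : ℝ) = (m : ℝ) + 1 := by
    have : m + 1 = n := by omega
    exact_mod_cast (congrArg (fun t : ℕ => (t : ℝ)) this).symm
  have hcap : (n : ℝ) * Real.log n / 2 ≤ (d:ℝ) * lam := by
    have hdcast : (d:ℝ) = ∑ b ∈ Finset.range B, ((m / 2^b : ℕ) : ℝ) * 2 ^ (B * T + b) := by
      rw [hd]; push_cast; rfl
    have hterm : ∀ b ∈ Finset.range B,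
        ((m:ℝ) + 1 - 2 ^ b) / 2 ≤ ((m / 2^b : ℕ) : ℝ) * 2 ^ (B * T + b) * lam := by
      intro b hbmem
      have hfrac : (2:ℝ) ^ (B * T + b) * lam = 2 ^ b / 2 := by
        rw [hlam, pow_add, pow_add, pow_one]
        have h1 : (0:ℝ) < 2 ^ (B * T) := by positivity
        field_simp
      rw [mul_assoc, hfrac]
      have hnat : m + 1 ≤ (m / 2^b) * 2^b + 2^b := by
        have h2 : 0 < 2^b := Nat.pow_pos (by norm_num)
        have hdm : m / 2^b * 2^b + m % 2^b = m := by
          rw [mul_comm]; exact Nat.div_add_mod _ _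
        have hmod : m % 2^b < 2^b := Nat.mod_lt _ h2
        omega
      have hreal : (m:ℝ) + 1 ≤ ((m / 2^b : ℕ) : ℝ) * 2^b + 2^b := by
        exact_mod_cast hnat
      have h2b : (0:ℝ) < 2 ^ b := by positivity
      rw [div_le_iff₀ (by norm_num : (0:ℝ) < 2)] at *
      nlinarith
    have hsum : ∑ b ∈ Finset.range B, ((m:ℝ) + 1 - 2 ^ b) / 2 ≤ (d:ℝ) * lam := by
      rw [hdcast, Finset.sum_mul]
      exact Finset.sum_le_sum hterm
    have hgeom : ∑ b ∈ Finset.range B, ((m:ℝ) + 1 - 2 ^ b) / 2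
        = ((B:ℝ) * ((m:ℝ)+1) - (2^B - 1)) / 2 := by
      rw [← Finset.sum_div]
      congr 1
      rw [Finset.sum_sub_distrib, Finset.sum_const, Finset.card_range,
        geom_sum_eq (by norm_num : (2:ℝ) ≠ 1)]
      push_cast
      ring
    have hpowm : (2:ℝ)^B ≤ (m:ℝ) := by
      have := Nat.pow_log_le_self 2 (show m ≠ 0 by omega)
      rw [hB]
      exact_mod_cast this
    have hlog : Real.log ((m:ℝ)+1) ≤ ((B:ℝ)+1) * Real.log 2 := by
      have h1 : m < 2 ^ (B+1) := by
        have := Nat.lt_pow_succ_log_self (by norm_num : 1 < 2) m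
        rw [hB]
        exact this
      have h2 : (m:ℝ) + 1 ≤ (2:ℝ) ^ (B+1) := by
        have : (m:ℝ) < (2:ℝ)^(B+1) := by exact_mod_cast h1
        have hint : (m:ℝ) + 1 ≤ ((2^(B+1) : ℕ) : ℝ) := by exact_mod_cast h1
        push_cast at hint
        linarith
      calc Real.log ((m:ℝ)+1) ≤ Real.log ((2:ℝ)^(B+1)) :=
            Real.log_le_log (by positivity) h2
        _ = ((B:ℝ)+1) * Real.log 2 := by rw [Real.log_pow]; push_cast; ring
    have hBreal : (6:ℝ) ≤ (B:ℝ) := by exact_mod_cast hB6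
    have hL : Real.log 2 < 0.6931471808 := Real.log_two_lt_d9
    have hL0 : (0:ℝ) < Real.log 2 := Real.log_pos (by norm_num)
    have hm0 : (0:ℝ) < (m:ℝ) + 1 := by positivity
    have hkey : ((m:ℝ)+1) * Real.log ((m:ℝ)+1) ≤ (B:ℝ) * ((m:ℝ)+1) - (m:ℝ) := by
      have h1 : ((m:ℝ)+1) * Real.log ((m:ℝ)+1) ≤ ((m:ℝ)+1) * (((B:ℝ)+1) * Real.log 2) :=
        mul_le_mul_of_nonneg_left hlog (by positivity)
      have h2 : ((B:ℝ)+1) * Real.log 2 ≤ (B:ℝ) - 1 := by nlinarith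
      have h3 : ((m:ℝ)+1) * (((B:ℝ)+1) * Real.log 2) ≤ ((m:ℝ)+1) * ((B:ℝ) - 1) :=
        mul_le_mul_of_nonneg_left h2 (by positivity)
      nlinarith
    calc (n : ℝ) * Real.log n / 2 = ((m:ℝ)+1) * Real.log ((m:ℝ)+1) / 2 := by rw [hnm]
      _ ≤ ((B:ℝ) * ((m:ℝ)+1) - (m:ℝ)) / 2 := by linarith
      _ ≤ ((B:ℝ) * ((m:ℝ)+1) - (2^B - 1)) / 2 := by
          have : (2:ℝ)^B - 1 ≤ (m:ℝ) := by linarith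
          linarith
      _ = ∑ b ∈ Finset.range B, ((m:ℝ) + 1 - 2 ^ b) / 2 := hgeom.symm
      _ ≤ (d:ℝ) * lam := hsum
  -- conclude
  have hterm : ENNReal.ofReal ((n : ℝ) * Real.log n / 2)
      ≤ ENNReal.ofReal ((((d - 1 : ℕ) : ℝ) + 1) * srearr y ((d-1) + 1)) := by
    apply ENNReal.ofReal_le_ofReal
    have hd1' : ((d - 1 : ℕ) : ℝ) + 1 = (d:ℝ) := by
      have : (d - 1) + 1 = d := by omega
      exact_mod_cast (congrArg (fun t : ℕ => (t : ℝ)) this)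
    have hdd : (d - 1) + 1 = d := by omega
    rw [hd1', hdd]
    calc (n : ℝ) * Real.log n / 2 ≤ (d:ℝ) * lam := hcap
      _ ≤ (d:ℝ) * srearr y d := mul_le_mul_of_nonneg_left hsre (by positivity)
  calc ENNReal.ofReal ((n : ℝ) * Real.log n / 2)
      ≤ ENNReal.ofReal ((((d - 1 : ℕ) : ℝ) + 1) * srearr y ((d-1) + 1)) := hterm
    _ ≤ swnorm y := le_iSup (fun k : ℕ => ENNReal.ofReal (((k : ℝ) + 1) * srearr y (k + 1))) (d-1)
end
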